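/- arXiv:2212.14818 — 2 statements merged into one kernel-verified Lean document; each statement's English description precedes it below -/
import Mathlib

section
/- Let μ₁ and μ₂ be finite positive Borel measures on ∂𝔻, each singular with respect to arc-length measure, and mutually singular with respect to each other; let g ∈ L¹(∂𝔻, m) be real-valued. Define on 𝔻 the singular inner functions S_{μ_i}(z) = exp(−∫_{∂𝔻} (ζ+z)/(ζ−z) dμ_i(ζ)) for i = 1, 2, the outer function O(z) = exp(∫_{∂𝔻} (ζ+z)/(ζ−z) g(ζ) dm(ζ)), and f = (S_{μ₁}/S_{μ₂})·O. Then the radial limits satisfy lim_{r→1⁻} f(rζ) = 0 for μ₁-a.e. ζ ∈ ∂𝔻, and lim_{r→1⁻} |f(rζ)| = ∞ for μ₂-a.e. ζ ∈ ∂𝔻. -/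
open MeasureTheory Filter Set Metric Topology Complex
open scoped ENNReal

noncomputable section

/-- The open unit disk in ℂ. -/
def unitDisk : Set ℂ := Metric.ball 0 1

/-- The unit circle in ℂ. -/
def unitCircle : Set ℂ := Metric.sphere 0 1

/-- Arclength measure on the unit circle (total mass `2 * π`), as a measure on ℂ. -/
def circleLen : Measure ℂ :=
  (volume.restrict (Set.Ioc (0:ℝ) (2*Real.pi))).map (fun t : ℝ => Complex.exp (t * Complex.I))

/-- Normalized arclength measure `m` on the unit circle. -/
def circleM : Measure ℂ := (ENNReal.ofReal (2*Real.pi))⁻¹ • circleLen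

/-- The closed support of a measure on ℂ. -/
def measSupport (μ : Measure ℂ) : Set ℂ := {x : ℂ | ∀ U ∈ nhds x, 0 < μ U}

/-- Open arc of the unit circle centered at `x` of half-length `ε`. -/
def arcC (x : ℂ) (ε : ℝ) : Set ℂ :=
  {z : ℂ | ∃ t : ℝ, |t| < ε ∧ z = Complex.exp (t * Complex.I) * x}

/-- Right arc `I^R(x, ε) = {e^{it} x : 0 ≤ t < ε}`. -/
def arcR (x : ℂ) (ε : ℝ) : Set ℂ :=
  {z : ℂ | ∃ t : ℝ, 0 ≤ t ∧ t < ε ∧ z = Complex.exp (t * Complex.I) * x}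

/-- Left arc `I^L(x, ε) = {e^{-it} x : 0 ≤ t < ε}`. -/
def arcL (x : ℂ) (ε : ℝ) : Set ℂ :=
  {z : ℂ | ∃ t : ℝ, 0 ≤ t ∧ t < ε ∧ z = Complex.exp (-(t * Complex.I)) * x}

/-- Open arc of length `L` starting (and excluding) `y`. -/
def arcFrom (y : ℂ) (L : ℝ) : Set ℂ :=
  {z : ℂ | ∃ t : ℝ, 0 < t ∧ t < L ∧ z = Complex.exp (t * Complex.I) * y}

/-- Poisson kernel for the unit disk: `P_z(ζ) = (1 - |z|²)/|ζ - z|²`. -/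
def poissonK (z ζ : ℂ) : ℝ := (1 - ‖z‖ ^ 2) / ‖ζ - z‖ ^ 2

/-- A Beurling–Carleson set: a closed subset of the unit circle of zero arclength measure
whose complementary arcs `I_k` (the connected components of the complement in the circle)
satisfy `Σ |I_k| log (1/|I_k|) < ∞`. -/
def IsBeurlingCarleson (E : Set ℂ) : Prop :=
  IsClosed E ∧ E ⊆ unitCircle ∧ circleM E = 0 ∧
    ∑' J : {C : Set ℂ // ∃ z ∈ unitCircle \ E, C = connectedComponentIn (unitCircle \ E) z},
      circleM (J : Set ℂ) * ENNReal.ofReal (Real.log (1 / (circleM (J : Set ℂ)).toReal)) < ⊤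

/-- An inner function: a holomorphic self-map of the unit disk whose radial limits exist
and have modulus one at a.e. point of the unit circle. -/
def IsInner (F : ℂ → ℂ) : Prop :=
  DifferentiableOn ℂ F unitDisk ∧ Set.MapsTo F unitDisk unitDisk ∧
    ∀ᵐ ζ ∂circleM, ∃ L : ℂ,
      Filter.Tendsto (fun r : ℝ => F ((r : ℂ) * ζ)) (𝓝[<] (1:ℝ)) (𝓝 L) ∧ ‖L‖ = 1

/-- A Jordan curve: the image of a continuous injective map of the unit circle. -/
def IsJordanCurve (C : Set ℂ) : Prop :=
  ∃ f : ℂ → ℂ, ContinuousOn f unitCircle ∧ Set.InjOn f unitCircle ∧ f '' unitCircle = C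

/-- A Jordan domain: a bounded, open, connected, simply connected set whose boundary
is a Jordan curve. -/
def IsJordanDomain (Ω : Set ℂ) : Prop :=
  IsOpen Ω ∧ IsConnected Ω ∧ Bornology.IsBounded Ω ∧ SimplyConnectedSpace ↥Ω ∧
    IsJordanCurve (frontier Ω)

/-- Stolz region at `q ∈ ∂𝔻` of aperture `M` in the unit disk. -/
def stolzAt (q : ℂ) (M : ℝ) : Set ℂ :=
  {z : ℂ | ‖z‖ < 1 ∧ ‖z - q‖ ≤ M * (1 - ‖z‖)}

/-- The open upper half-plane, as a subset of ℂ. -/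
def upperHP : Set ℂ := {z : ℂ | 0 < z.im}

/-- The cone `{z ∈ ℍ : |Re z| ≤ M Im z}` at 0. -/
def coneAt (M : ℝ) : Set ℂ := {z : ℂ | 0 < z.im ∧ |z.re| ≤ M * z.im}

/-- A domain `W ⊆ ℍ` with `0 ∈ ∂W` is thick at 0 if some Riemann map `φ : ℍ → W`
has a nonzero angular derivative at 0. -/
def ThickAtZeroH (W : Set ℂ) : Prop :=
  ∃ (φ : ℂ → ℂ) (α : ℝ), 0 < α ∧
    DifferentiableOn ℂ φ upperHP ∧ Set.BijOn φ upperHP W ∧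
    ∀ M : ℝ, 0 < M →
      Filter.Tendsto φ (𝓝[coneAt M] 0) (𝓝 0) ∧
      Filter.Tendsto (fun z => φ z / z) (𝓝[coneAt M] 0) (𝓝 (α : ℂ))

/-- A simply connected domain `Ω ⊆ 𝔻` is thick at `p ∈ ∂Ω ∩ ∂𝔻` if some Riemann map
`φ : 𝔻 → Ω` has a nonzero angular derivative at `p`. -/
def ThickAtD (Ω : Set ℂ) (p : ℂ) : Prop :=
  ∃ (φ : ℂ → ℂ) (q α : ℂ), ‖q‖ = 1 ∧ α ≠ 0 ∧
    DifferentiableOn ℂ φ unitDisk ∧ Set.BijOn φ unitDisk Ω ∧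
    ∀ M : ℝ, 0 < M →
      Filter.Tendsto φ (𝓝[stolzAt q M] q) (𝓝 p) ∧
      Filter.Tendsto (fun z => (φ z - p) / (z - q)) (𝓝[stolzAt q M] q) (𝓝 α)

end

noncomputable section
namespace Stmt12Aux


def Kre (z a : ℂ) : ℝ := ((a + z) / (a - z)).re

lemma measurable_Kre (z : ℂ) : Measurable (Kre z) :=
  Complex.measurable_re.comp ((measurable_id.add_const z).div (measurable_id.sub_const z))

lemma Kre_eq {a : ℂ} (ha : normSq a = 1) (z : ℂ) :
    Kre z a = (1 - normSq z) / normSq (a - z) := by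
  unfold Kre
  rw [Complex.div_re, ← add_div]
  congr 1
  simp only [Complex.normSq_apply, Complex.add_re, Complex.add_im, Complex.sub_re,
    Complex.sub_im] at *
  linear_combination ha

lemma normSq_sub_mul {a ζ : ℂ} (ha : normSq a = 1) (hζ : normSq ζ = 1) (r : ℝ) :
    normSq (a - (r:ℂ) * ζ) = (1 - r)^2 + r * normSq (a - ζ) := by
  simp only [Complex.normSq_apply, Complex.sub_re, Complex.sub_im, Complex.mul_re,
    Complex.mul_im, Complex.ofReal_re, Complex.ofReal_im] at *
  ring_nf
  linear_combination (1 - r) * ha + (r^2 - r) * hζ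

lemma Kre_circle {a ζ : ℂ} (ha : normSq a = 1) (hζ : normSq ζ = 1) (r : ℝ) :
    Kre ((r:ℂ) * ζ) a = (1 - r^2) / ((1 - r)^2 + r * normSq (a - ζ)) := by
  rw [Kre_eq ha, normSq_sub_mul ha hζ]
  congr 1
  rw [Complex.normSq_mul, hζ, mul_one, Complex.normSq_ofReal]
  ring

lemma Kre_nonneg {a ζ : ℂ} (ha : normSq a = 1) (hζ : normSq ζ = 1) {r : ℝ}
    (hr0 : 0 ≤ r) (hr1 : r ≤ 1) : 0 ≤ Kre ((r:ℂ) * ζ) a := by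
  rw [Kre_circle ha hζ]
  have := Complex.normSq_nonneg (a - ζ)
  apply div_nonneg <;> nlinarith

lemma Kre_le {a ζ : ℂ} (ha : normSq a = 1) (hζ : normSq ζ = 1) {r : ℝ}
    (hr0 : 0 ≤ r) (hr1 : r < 1) : Kre ((r:ℂ) * ζ) a ≤ 2 / (1 - r) := by
  rw [Kre_circle ha hζ]
  have h1 := Complex.normSq_nonneg (a - ζ)
  rw [div_le_div_iff₀ (by nlinarith) (by linarith)]
  nlinarith [sq_nonneg (1 - r)]

lemma Kre_lower {a ζ : ℂ} (ha : normSq a = 1) (hζ : normSq ζ = 1) {r : ℝ}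
    (hr0 : 0 ≤ r) (hr1 : r < 1) (hd : normSq (a - ζ) ≤ (1 - r)^2) :
    (1 - r)⁻¹ ≤ Kre ((r:ℂ) * ζ) a := by
  rw [Kre_circle ha hζ]
  have h1 := Complex.normSq_nonneg (a - ζ)
  have hD : 0 < (1 - r)^2 + r * normSq (a - ζ) := by nlinarith
  rw [le_div_iff₀ hD, inv_mul_le_iff₀ (by linarith : (0:ℝ) < 1 - r)]
  nlinarith

lemma mem_circle_iff {a : ℂ} : a ∈ unitCircle ↔ normSq a = 1 := by
  rw [unitCircle, mem_sphere_iff_norm, sub_zero,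
    ← Complex.sq_norm]
  constructor
  · intro h; rw [h]; norm_num
  · intro h
    nlinarith [norm_nonneg a]

/-- The Poisson-type lintegral. -/
def Pl (σ : Measure ℂ) (z : ℂ) : ℝ≥0∞ := ∫⁻ a, ENNReal.ofReal (Kre z a) ∂σ

lemma ae_normSq {σ : Measure ℂ} (hσ : σ unitCircleᶜ = 0) : ∀ᵐ a ∂σ, normSq a = 1 := by
  rw [ae_iff]
  refine measure_mono_null (fun a haa => ?_) hσ
  simp only [mem_setOf_eq] at haa
  simp only [mem_compl_iff, mem_circle_iff]
  exact haa

lemma measure_eq_inter {σ : Measure ℂ} (hσ : σ unitCircleᶜ = 0) (S : Set ℂ) :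
    σ S = σ (S ∩ unitCircle) := by
  refine le_antisymm ?_ (measure_mono inter_subset_left)
  calc σ S ≤ σ ((S ∩ unitCircle) ∪ unitCircleᶜ) := measure_mono (fun x hx => by
        by_cases h : x ∈ unitCircle
        exacts [Or.inl ⟨hx, h⟩, Or.inr h])
    _ ≤ σ (S ∩ unitCircle) + σ unitCircleᶜ := measure_union_le _ _
    _ = σ (S ∩ unitCircle) := by rw [hσ, add_zero]

lemma Pl_le (σ : Measure ℂ) (hσc : σ unitCircleᶜ = 0) {ζ : ℂ} (hζ : normSq ζ = 1)
    {r : ℝ} (hr0 : 0 ≤ r) (hr1 : r < 1) :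
    Pl σ ((r:ℂ)*ζ) ≤ ENNReal.ofReal (2/(1-r)) * σ univ := by
  calc Pl σ ((r:ℂ)*ζ) ≤ ∫⁻ _, ENNReal.ofReal (2/(1-r)) ∂σ :=
        lintegral_mono_ae ((ae_normSq hσc).mono fun a ha =>
          ENNReal.ofReal_le_ofReal (Kre_le ha hζ hr0 hr1))
    _ = ENNReal.ofReal (2/(1-r)) * σ univ := lintegral_const _

lemma Pl_ne_top (σ : Measure ℂ) [IsFiniteMeasure σ] (hσc : σ unitCircleᶜ = 0) {ζ : ℂ}
    (hζ : normSq ζ = 1) {r : ℝ} (hr0 : 0 ≤ r) (hr1 : r < 1) : Pl σ ((r:ℂ)*ζ) ≠ ⊤ :=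
  (lt_of_le_of_lt (Pl_le σ hσc hζ hr0 hr1)
    (ENNReal.mul_lt_top ENNReal.ofReal_lt_top (measure_lt_top _ _))).ne

lemma Pl_lower (μ : Measure ℂ) (hμc : μ unitCircleᶜ = 0) {ζ : ℂ} (hζ : normSq ζ = 1)
    {r : ℝ} (hr0 : 0 ≤ r) (hr1 : r < 1) :
    ENNReal.ofReal (1-r)⁻¹ * μ (closedBall ζ (1-r)) ≤ Pl μ ((r:ℂ)*ζ) := by
  rw [measure_eq_inter hμc]
  calc ENNReal.ofReal (1-r)⁻¹ * μ (closedBall ζ (1-r) ∩ unitCircle)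
      = ∫⁻ _ in closedBall ζ (1-r) ∩ unitCircle, ENNReal.ofReal (1-r)⁻¹ ∂μ :=
        (setLIntegral_const _ _).symm
    _ ≤ ∫⁻ a in closedBall ζ (1-r) ∩ unitCircle, ENNReal.ofReal (Kre ((r:ℂ)*ζ) a) ∂μ := by
        refine setLIntegral_mono ((measurable_Kre _).ennreal_ofReal) (fun a ha => ?_)
        refine ENNReal.ofReal_le_ofReal (Kre_lower (mem_circle_iff.mp ha.2) hζ hr0 hr1 ?_)
        have hd : dist a ζ ≤ 1 - r := mem_closedBall.mp ha.1
        have : ‖a - ζ‖ ≤ 1 - r := by rwa [← Complex.dist_eq]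
        calc normSq (a - ζ) = ‖a - ζ‖ ^ 2 := (Complex.sq_norm _).symm
          _ ≤ (1-r)^2 := by nlinarith [norm_nonneg (a - ζ)]
    _ ≤ Pl μ ((r:ℂ)*ζ) := setLIntegral_le_lintegral _ _

lemma superlevel_iff {a ζ : ℂ} (ha : normSq a = 1) (hζ : normSq ζ = 1) {r t : ℝ}
    (hr0 : 0 < r) (hr1 : r < 1) (ht : 0 < t) :
    t ≤ Kre ((r:ℂ)*ζ) a ↔ normSq (a - ζ) ≤ ((1-r^2)/t - (1-r)^2)/r := by
  rw [Kre_circle ha hζ]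
  have h1 := Complex.normSq_nonneg (a - ζ)
  have hD : 0 < (1-r)^2 + r * normSq (a - ζ) := by nlinarith
  rw [le_div_iff₀ hD, le_div_iff₀ hr0]
  constructor
  · intro h; rw [le_sub_iff_add_le, le_div_iff₀ ht]; nlinarith
  · intro h; rw [le_sub_iff_add_le, le_div_iff₀ ht] at h; nlinarith

lemma layercake (σ : Measure ℂ) (hσc : σ unitCircleᶜ = 0) {ζ : ℂ} (hζ : normSq ζ = 1)
    {r : ℝ} (hr0 : 0 ≤ r) (hr1 : r < 1) :
    Pl σ ((r:ℂ)*ζ) = ∫⁻ t in Ioi (0:ℝ), σ {a | t ≤ Kre ((r:ℂ)*ζ) a} :=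
  lintegral_eq_lintegral_meas_le σ
    ((ae_normSq hσc).mono fun a ha => Kre_nonneg ha hζ hr0 hr1.le)
    (measurable_Kre _).aemeasurable

lemma key (μ ν : Measure ℂ) [IsFiniteMeasure μ] [IsFiniteMeasure ν]
    (hμc : μ unitCircleᶜ = 0) (hνc : ν unitCircleᶜ = 0)
    {ζ : ℂ} (hζ : normSq ζ = 1) {ε : ℝ≥0∞} (hε : ε ≠ ⊤) {R : ℝ} (hR0 : 0 < R)
    (hcomp : ∀ s : ℝ, 0 < s → s ≤ R → ν (closedBall ζ s) ≤ ε * μ (closedBall ζ s))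
    {r : ℝ} (hr0 : 0 < r) (hr1 : r < 1) :
    Pl ν ((r:ℂ)*ζ) ≤ ε * Pl μ ((r:ℂ)*ζ)
      + ENNReal.ofReal ((1-r^2)/((1-r)^2 + r*R^2)) * ν univ := by
  set z := (r:ℂ)*ζ with hz
  set tR : ℝ := (1-r^2)/((1-r)^2 + r*R^2) with htR
  set t0 : ℝ := (1-r^2)/(1-r)^2 with ht0
  have hRpos : 0 < tR := by apply div_pos <;> nlinarith
  have hpt : ∀ t ∈ Ioi (0:ℝ), t ≠ t0 →
      ν {a | t ≤ Kre z a} ≤ (Ioo (0:ℝ) tR).indicator (fun _ => ν univ) t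
        + ε * μ {a | t ≤ Kre z a} := by
    intro t ht hth0
    rw [mem_Ioi] at ht
    rcases lt_or_ge t tR with hcase | hcase
    · have hmem : t ∈ Ioo (0:ℝ) tR := ⟨ht, hcase⟩
      have hind : (Ioo (0:ℝ) tR).indicator (fun _ => ν univ) t = ν univ :=
        indicator_of_mem hmem _
      rw [hind]
      exact le_add_right (measure_mono (subset_univ _))
    · set q : ℝ := ((1-r^2)/t - (1-r)^2)/r with hq
      have hsup : ∀ a : ℂ, normSq a = 1 → (t ≤ Kre z a ↔ normSq (a - ζ) ≤ q) :=
        fun a ha => superlevel_iff ha hζ hr0 hr1 ht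
      rcases lt_or_ge q 0 with hqneg | hqpos
      · have hempty : ν {a | t ≤ Kre z a} = 0 := by
          rw [measure_eq_inter hνc]
          convert measure_empty
          · ext a
            simp only [mem_inter_iff, mem_setOf_eq, mem_empty_iff_false, iff_false, not_and]
            intro hta hac
            have := (hsup a (mem_circle_iff.mp hac)).mp hta
            nlinarith [Complex.normSq_nonneg (a - ζ)]
          · infer_instance
        rw [hempty]
        exact zero_le
      · have hqt0 : q ≠ 0 := by
          intro hq0
          apply hth0
          rw [hq, div_eq_zero_iff] at hq0
          rcases hq0 with h | h
          · rw [sub_eq_zero, div_eq_iff ht.ne'] at h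
            rw [ht0, eq_div_iff (by nlinarith : ((1:ℝ)-r)^2 ≠ 0)]
            linarith
          · linarith
        have hqposs : 0 < q := lt_of_le_of_ne hqpos (Ne.symm hqt0)
        set ρ := Real.sqrt q with hρ
        have hρpos : 0 < ρ := Real.sqrt_pos.mpr hqposs
        have hqR : q ≤ R^2 := by
          rw [hq, div_le_iff₀ hr0, sub_le_iff_le_add, div_le_iff₀ ht]
          have h2 : (1-r^2) = tR * ((1-r)^2 + r*R^2) := by
            rw [htR]; field_simp
          nlinarith [mul_le_mul_of_nonneg_right hcase
            (by nlinarith : (0:ℝ) ≤ (1-r)^2 + r*R^2)]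
        have hρR : ρ ≤ R :=
          le_trans (Real.sqrt_le_sqrt hqR) (le_of_eq (Real.sqrt_sq hR0.le))
        have hset : {a | t ≤ Kre z a} ∩ unitCircle = closedBall ζ ρ ∩ unitCircle := by
          ext a
          simp only [mem_inter_iff, mem_setOf_eq, mem_closedBall, and_congr_left_iff]
          intro hac
          rw [hsup a (mem_circle_iff.mp hac), Complex.dist_eq, hρ,
            Real.le_sqrt (norm_nonneg _) hqpos, Complex.sq_norm]
        calc ν {a | t ≤ Kre z a} = ν ({a | t ≤ Kre z a} ∩ unitCircle) :=
              measure_eq_inter hνc _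
          _ = ν (closedBall ζ ρ ∩ unitCircle) := by rw [hset]
          _ ≤ ν (closedBall ζ ρ) := measure_mono inter_subset_left
          _ ≤ ε * μ (closedBall ζ ρ) := hcomp ρ hρpos hρR
          _ = ε * μ (closedBall ζ ρ ∩ unitCircle) := by rw [← measure_eq_inter hμc]
          _ = ε * μ ({a | t ≤ Kre z a} ∩ unitCircle) := by rw [hset]
          _ = ε * μ {a | t ≤ Kre z a} := by rw [← measure_eq_inter hμc]
          _ ≤ _ := le_add_left le_rfl
  have hmain : (∫⁻ t in Ioi (0:ℝ), ν {a | t ≤ Kre z a}) ≤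
      ∫⁻ t in Ioi (0:ℝ),
        ((Ioo (0:ℝ) tR).indicator (fun _ => ν univ) t + ε * μ {a | t ≤ Kre z a}) := by
    refine lintegral_mono_ae ?_
    have hnull : (volume.restrict (Ioi (0:ℝ))) {t0} = 0 :=
      le_antisymm (le_trans (Measure.restrict_le_self _) (by simp)) zero_le
    filter_upwards [ae_restrict_mem measurableSet_Ioi,
      (ae_iff.mpr (by simpa using hnull) : ∀ᵐ t ∂(volume.restrict (Ioi (0:ℝ))), t ≠ t0)]
      with t ht1 ht2
    exact hpt t ht1 ht2
  rw [layercake ν hνc hζ hr0.le hr1, layercake μ hμc hζ hr0.le hr1]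
  refine le_trans hmain ?_
  rw [lintegral_add_left (measurable_const.indicator measurableSet_Ioo),
    lintegral_indicator measurableSet_Ioo, setLIntegral_const,
    lintegral_const_mul' _ _ hε]
  rw [Measure.restrict_apply measurableSet_Ioo,
    inter_eq_self_of_subset_left Ioo_subset_Ioi_self, Real.volume_Ioo, sub_zero,
    add_comm, mul_comm (ν univ)]



lemma measurable_expMap : Measurable (fun t : ℝ => Complex.exp (t * Complex.I)) :=
  (Complex.measurable_ofReal.mul measurable_const).cexp

lemma expMap_mem_circle (t : ℝ) : Complex.exp (t * Complex.I) ∈ unitCircle := by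
  simp only [unitCircle, mem_sphere_iff_norm, sub_zero,
    Complex.norm_exp_ofReal_mul_I]

lemma circleLen_compl_circle : circleLen unitCircleᶜ = 0 := by
  have hmeas : MeasurableSet unitCircle := Metric.isClosed_sphere.measurableSet
  rw [circleLen, Measure.map_apply measurable_expMap hmeas.compl]
  convert measure_empty
  · ext t
    simp only [mem_preimage, mem_compl_iff, mem_empty_iff_false, iff_false, not_not]
    exact expMap_mem_circle t
  · infer_instance

lemma circleM_compl_circle : circleM unitCircleᶜ = 0 := by
  rw [circleM, Measure.smul_apply, circleLen_compl_circle, smul_eq_mul, mul_zero]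

instance : IsFiniteMeasure circleLen := by
  constructor
  rw [circleLen, Measure.map_apply measurable_expMap MeasurableSet.univ, preimage_univ,
    Measure.restrict_apply MeasurableSet.univ, univ_inter, Real.volume_Ioc]
  exact ENNReal.ofReal_lt_top

instance : IsFiniteMeasure circleM := by
  constructor
  rw [circleM, Measure.smul_apply, smul_eq_mul]
  exact ENNReal.mul_lt_top (by simp [Real.pi_pos]) (measure_lt_top _ _)

lemma dist_expMap (a b : ℝ) :
    dist (Complex.exp (a * Complex.I)) (Complex.exp (b * Complex.I)) ≤ |a - b| := by
  have h := (lipschitzWith_circleMap 0 1).dist_le_mul a b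
  simpa [circleMap, Real.dist_eq] using h

lemma circleM_ball_lower {ζ : ℂ} (hζ : ‖ζ‖ = 1) {s : ℝ} (h0 : 0 < s) (h1 : s ≤ 1) :
    ENNReal.ofReal (s / (2*Real.pi)) ≤ circleM (closedBall ζ s) := by
  have hπ := Real.pi_gt_three
  -- find t₀ ∈ (0, 2π] with exp (t₀ I) = ζ
  obtain ⟨t₀, ht₀mem, ht₀⟩ : ∃ t₀ : ℝ, t₀ ∈ Set.Ioc 0 (2*Real.pi) ∧
      Complex.exp (t₀ * Complex.I) = ζ := by
    have harg := Complex.arg_mem_Ioc ζ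
    have hz : Complex.exp ((Complex.arg ζ : ℂ) * Complex.I) = ζ := by
      have := Complex.norm_mul_exp_arg_mul_I ζ
      rwa [hζ, Complex.ofReal_one, one_mul] at this
    rcases lt_or_ge 0 (Complex.arg ζ) with h | h
    · exact ⟨Complex.arg ζ, ⟨h, by nlinarith [harg.2]⟩, hz⟩
    · refine ⟨Complex.arg ζ + 2*Real.pi, ⟨by nlinarith [harg.1], by nlinarith⟩, ?_⟩
      rw [Complex.ofReal_add, add_mul, Complex.exp_add, hz]
      have : ((2*Real.pi : ℝ) : ℂ) * Complex.I = 2 * Real.pi * Complex.I := by push_cast; ring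
      rw [this, Complex.exp_two_pi_mul_I, mul_one]
  -- choose the subinterval J
  set J : Set ℝ := if Real.pi ≤ t₀ then Set.Ioc (t₀ - s) t₀ else Set.Ioc t₀ (t₀ + s) with hJ
  have hJsub : J ⊆ Set.Ioc 0 (2*Real.pi) := by
    rw [hJ]; split_ifs with h
    · intro t ht; exact ⟨by cases ht; nlinarith, le_trans (by cases ht; linarith) ht₀mem.2⟩
    · intro t ht; exact ⟨lt_trans ht₀mem.1 ht.1, by cases ht; push_neg at h; nlinarith⟩
  have hJpre : J ⊆ (fun t : ℝ => Complex.exp (t * Complex.I)) ⁻¹' closedBall ζ s := by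
    intro t ht
    simp only [mem_preimage, Metric.mem_closedBall, ← ht₀]
    refine le_trans (dist_expMap t t₀) ?_
    rw [hJ] at ht; split_ifs at ht with h
    · rw [abs_le]; constructor <;> [linarith [ht.1]; linarith [ht.2]]
    · rw [abs_le]; constructor <;> [linarith [ht.1]; linarith [ht.2]]
  have hJvol : volume J = ENNReal.ofReal s := by
    rw [hJ]; split_ifs <;> simp [Real.volume_Ioc]
  have hlen : ENNReal.ofReal s ≤ circleLen (closedBall ζ s) := by
    rw [circleLen, Measure.map_apply measurable_expMap measurableSet_closedBall,
      Measure.restrict_apply (measurable_expMap measurableSet_closedBall)]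
    calc ENNReal.ofReal s = volume J := hJvol.symm
      _ ≤ volume (_ ∩ Set.Ioc 0 (2*Real.pi)) := measure_mono (subset_inter hJpre hJsub)
  rw [circleM, Measure.smul_apply, smul_eq_mul]
  rw [ENNReal.ofReal_div_of_pos (by positivity), ENNReal.div_eq_inv_mul]
  exact mul_le_mul_right hlen _
lemma abs_of_normSq {ζ : ℂ} (hζ : normSq ζ = 1) : ‖ζ‖ = 1 := by
  rw [Complex.norm_def, hζ, Real.sqrt_one]

lemma main_pt (μ ν : Measure ℂ) [IsFiniteMeasure μ] [IsFiniteMeasure ν]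
    (hμc : μ unitCircleᶜ = 0) (hνc : ν unitCircleᶜ = 0) {ζ : ℂ} (hζ : normSq ζ = 1)
    (h1 : Tendsto (fun s : ℝ => ν (closedBall ζ s) / μ (closedBall ζ s)) (𝓝[>] 0) (𝓝 0))
    (h2 : Tendsto (fun s : ℝ => circleM (closedBall ζ s) / μ (closedBall ζ s)) (𝓝[>] 0) (𝓝 0)) :
    Tendsto (fun r : ℝ => (Pl ν ((r:ℂ)*ζ)).toReal - (Pl μ ((r:ℂ)*ζ)).toReal)
      (𝓝[<] (1:ℝ)) atBot := by
  have hζabs : ‖ζ‖ = 1 := abs_of_normSq hζ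
  -- Step 1 : a radius R on which ν-balls are dominated by half the μ-balls
  have hhalf : ∀ᶠ s in 𝓝[>] (0:ℝ), ν (closedBall ζ s) / μ (closedBall ζ s) < 2⁻¹ :=
    h1.eventually_lt_const (by norm_num)
  obtain ⟨R, hRmem, hRsub⟩ := mem_nhdsGT_iff_exists_Ioc_subset.mp hhalf
  rw [mem_Ioi] at hRmem
  have hcomp : ∀ s : ℝ, 0 < s → s ≤ R →
      ν (closedBall ζ s) ≤ 2⁻¹ * μ (closedBall ζ s) := by
    intro s hs0 hsR
    have hlt := hRsub ⟨hs0, hsR⟩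
    simp only [mem_setOf_eq] at hlt
    rcases eq_or_ne (μ (closedBall ζ s)) 0 with h0 | h0
    · rw [h0, mul_zero]
      rcases eq_or_ne (ν (closedBall ζ s)) 0 with h0' | h0'
      · exact le_of_eq h0'
      · rw [h0, ENNReal.div_zero h0'] at hlt
        exact absurd hlt (by simp)
    · exact (ENNReal.div_le_iff h0 (measure_ne_top μ _)).mp hlt.le
  -- Step 2 : Pl μ tends to infinity radially
  have hT : Tendsto (fun r : ℝ => (Pl μ ((r:ℂ)*ζ)).toReal) (𝓝[<] (1:ℝ)) atTop := by
    rw [Filter.tendsto_atTop]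
    intro M
    set M' := max M 0 + 1 with hM'
    have hM'pos : 0 < M' := by have := le_max_right M 0; linarith
    set c : ℝ≥0∞ := ENNReal.ofReal (1 / (2*Real.pi*M')) with hc
    have hπ := Real.pi_pos
    have hcpos : 0 < c := ENNReal.ofReal_pos.mpr (by positivity)
    have hev : ∀ᶠ s in 𝓝[>] (0:ℝ),
        circleM (closedBall ζ s) / μ (closedBall ζ s) < c := h2.eventually_lt_const hcpos
    obtain ⟨R', hR'mem, hR'sub⟩ := mem_nhdsGT_iff_exists_Ioc_subset.mp hev
    rw [mem_Ioi] at hR'mem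
    set R'' := min R' 1 with hR''def
    have hR''pos : 0 < R'' := lt_min hR'mem one_pos
    have hR''le : R'' ≤ 1 := min_le_right _ _
    have hball : ∀ s : ℝ, 0 < s → s ≤ R'' →
        ENNReal.ofReal (M' * s) ≤ μ (closedBall ζ s) := by
      intro s hs0 hsR
      have hlow := circleM_ball_lower hζabs hs0 (le_trans hsR hR''le)
      have hlt := hR'sub ⟨hs0, le_trans hsR (min_le_left _ _)⟩
      simp only [mem_setOf_eq] at hlt
      have hμ0 : μ (closedBall ζ s) ≠ 0 := by
        intro hzero
        rw [hzero] at hlt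
        have hcircpos : (0:ℝ≥0∞) < circleM (closedBall ζ s) :=
          lt_of_lt_of_le (ENNReal.ofReal_pos.mpr (by positivity)) hlow
        rw [ENNReal.div_zero hcircpos.ne'] at hlt
        exact absurd hlt (by simp)
      have hle : circleM (closedBall ζ s) ≤ c * μ (closedBall ζ s) :=
        (ENNReal.div_le_iff hμ0 (measure_ne_top μ _)).mp hlt.le
      have h3 : ENNReal.ofReal (s/(2*Real.pi)) ≤ c * μ (closedBall ζ s) :=
        le_trans hlow hle
      have h4 : ENNReal.ofReal (s/(2*Real.pi)) / c ≤ μ (closedBall ζ s) :=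
        ENNReal.div_le_of_le_mul' h3
      calc ENNReal.ofReal (M'*s) = ENNReal.ofReal (s/(2*Real.pi)) / c := by
            rw [hc, ← ENNReal.ofReal_div_of_pos (by positivity)]
            congr 1
            field_simp
        _ ≤ _ := h4
    filter_upwards [Ioo_mem_nhdsLT_of_mem
      (show (1:ℝ) ∈ Ioc (1-R'') 1 from ⟨by linarith, le_rfl⟩)] with r hr
    have hr0 : (0:ℝ) ≤ r := by
      have := hr.1; linarith
    have hr1 : r < 1 := hr.2
    have hs : 0 < 1 - r := by linarith
    have hsR : 1 - r ≤ R'' := by linarith [hr.1]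
    have h5 := le_trans
      (mul_le_mul_right (hball (1-r) hs hsR) (ENNReal.ofReal (1-r)⁻¹))
      (Pl_lower μ hμc hζ hr0 hr1)
    have h6 : ENNReal.ofReal (1-r)⁻¹ * ENNReal.ofReal (M'*(1-r)) = ENNReal.ofReal M' := by
      rw [← ENNReal.ofReal_mul (by positivity)]
      congr 1
      field_simp
    rw [h6] at h5
    have h7 : M' ≤ (Pl μ ((r:ℂ)*ζ)).toReal := by
      have := ENNReal.toReal_mono (Pl_ne_top μ hμc hζ hr0 hr1) h5
      rwa [ENNReal.toReal_ofReal hM'pos.le] at this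
    have := le_max_left M 0
    linarith
  -- Step 3 : combine
  rw [Filter.tendsto_atBot]
  intro b
  set C : ℝ := (2/R^2) * (ν univ).toReal with hC
  have hkey : ∀ r : ℝ, 2⁻¹ ≤ r → r < 1 →
      (Pl ν ((r:ℂ)*ζ)).toReal ≤ 2⁻¹ * (Pl μ ((r:ℂ)*ζ)).toReal + C := by
    intro r hr2 hr1
    have hr0 : (0:ℝ) < r := lt_of_lt_of_le (by norm_num) hr2
    have h8 := key μ ν hμc hνc hζ (by norm_num : (2⁻¹:ℝ≥0∞) ≠ ⊤) hRmem hcomp hr0 hr1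
    have h9 : (1-r^2)/((1-r)^2 + r*R^2) ≤ 2/R^2 := by
      rw [div_le_div_iff₀ (by nlinarith) (by positivity)]
      nlinarith [sq_nonneg (1-r), sq_nonneg R]
    have h10 : Pl ν ((r:ℂ)*ζ) ≤ 2⁻¹ * Pl μ ((r:ℂ)*ζ) + ENNReal.ofReal (2/R^2) * ν univ := by
      exact le_trans h8 (add_le_add_right
        (mul_le_mul_left (ENNReal.ofReal_le_ofReal h9) _) _)
    have hne1 : (2⁻¹:ℝ≥0∞) * Pl μ ((r:ℂ)*ζ) ≠ ⊤ :=
      ENNReal.mul_ne_top (by norm_num) (Pl_ne_top μ hμc hζ hr0.le hr1)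
    have hne2 : ENNReal.ofReal (2/R^2) * ν univ ≠ ⊤ :=
      ENNReal.mul_ne_top ENNReal.ofReal_ne_top (measure_ne_top ν _)
    have h11 := ENNReal.toReal_mono (ENNReal.add_ne_top.mpr ⟨hne1, hne2⟩) h10
    rw [ENNReal.toReal_add hne1 hne2, ENNReal.toReal_mul, ENNReal.toReal_mul,
      ENNReal.toReal_ofReal (by positivity)] at h11
    have h12 : ((2⁻¹:ℝ≥0∞)).toReal = (2⁻¹:ℝ) := by
      rw [ENNReal.toReal_inv]; norm_num
    rw [h12] at h11
    exact h11
  filter_upwards [hT.eventually_ge_atTop (2*(C - b)), Ioo_mem_nhdsLT_of_mem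
      (show (1:ℝ) ∈ Ioc (2⁻¹:ℝ) 1 from ⟨by norm_num, le_rfl⟩)] with r hge hr
  have h13 := hkey r hr.1.le hr.2
  linarith

lemma abs_K_le {a ζ : ℂ} (ha : normSq a = 1) (hζ : normSq ζ = 1) {r : ℝ}
    (hr0 : 0 ≤ r) (hr1 : r < 1) :
    ‖(a + (r:ℂ)*ζ) / (a - (r:ℂ)*ζ)‖ ≤ 2/(1-r) := by
  have haa : ‖a‖ = 1 := abs_of_normSq ha
  have hzz : ‖(r:ℂ)*ζ‖ = r := by
    rw [norm_mul, Complex.norm_real, Real.norm_of_nonneg hr0, abs_of_normSq hζ, mul_one]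
  rw [norm_div]
  have h1 : ‖a + (r:ℂ)*ζ‖ ≤ 2 := by
    calc ‖a + (r:ℂ)*ζ‖ ≤ ‖a‖ + ‖(r:ℂ)*ζ‖ :=
          norm_add_le _ _
      _ ≤ 2 := by rw [haa, hzz]; linarith
  have h2 : 1 - r ≤ ‖a - (r:ℂ)*ζ‖ := by
    calc 1 - r = ‖a‖ - ‖(r:ℂ)*ζ‖ := by rw [haa, hzz]
      _ ≤ |‖a‖ - ‖(r:ℂ)*ζ‖| := le_abs_self _
      _ ≤ ‖a - (r:ℂ)*ζ‖ := abs_norm_sub_norm_le _ _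
  have h3 : (0:ℝ) < 1 - r := by linarith
  exact div_le_div₀ (by norm_num) h1 h3 h2

lemma integrable_K (σ : Measure ℂ) [IsFiniteMeasure σ] (hσc : σ unitCircleᶜ = 0)
    {ζ : ℂ} (hζ : normSq ζ = 1) {r : ℝ} (hr0 : 0 ≤ r) (hr1 : r < 1) :
    Integrable (fun a : ℂ => (a + (r:ℂ)*ζ) / (a - (r:ℂ)*ζ)) σ := by
  refine Integrable.mono' (integrable_const (2/(1-r)))
    ((measurable_id.add_const _).div (measurable_id.sub_const _)).aestronglyMeasurable ?_
  filter_upwards [ae_normSq hσc] with a ha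
  exact abs_K_le ha hζ hr0 hr1

lemma re_integral_eq (σ : Measure ℂ) [IsFiniteMeasure σ] (hσc : σ unitCircleᶜ = 0)
    {ζ : ℂ} (hζ : normSq ζ = 1) {r : ℝ} (hr0 : 0 ≤ r) (hr1 : r < 1) :
    (∫ a, (a + ((r:ℂ)*ζ)) / (a - ((r:ℂ)*ζ)) ∂σ).re = (Pl σ ((r:ℂ)*ζ)).toReal := by
  have h := integral_re (μ := σ) (f := fun a : ℂ => (a + ((r:ℂ)*ζ)) / (a - ((r:ℂ)*ζ)))
    (integrable_K σ hσc hζ hr0 hr1)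
  simp only [RCLike.re_to_complex] at h
  rw [← h]
  rw [show (fun a : ℂ => ((a + ((r:ℂ)*ζ)) / (a - ((r:ℂ)*ζ))).re) = Kre ((r:ℂ)*ζ) from rfl]
  rw [integral_eq_lintegral_of_nonneg_ae
    ((ae_normSq hσc).mono fun a ha => Kre_nonneg ha hζ hr0 hr1.le)
    (measurable_Kre _).aestronglyMeasurable]
  rfl

lemma g_re_integral_le (g : ℂ → ℝ) (hg : Integrable g circleM)
    {ζ : ℂ} (hζ : normSq ζ = 1) {r : ℝ} (hr0 : 0 ≤ r) (hr1 : r < 1) :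
    |(∫ a, ((a + ((r:ℂ)*ζ)) / (a - ((r:ℂ)*ζ))) * (g a : ℂ) ∂circleM).re|
      ≤ (Pl (circleM.withDensity (fun a => ENNReal.ofReal |g a|)) ((r:ℂ)*ζ)).toReal := by
  set z := (r:ℂ)*ζ with hz
  have hKmeas : AEStronglyMeasurable (fun a : ℂ => (a + z) / (a - z)) circleM :=
    ((measurable_id.add_const _).div (measurable_id.sub_const _)).aestronglyMeasurable
  have hintKg : Integrable (fun a : ℂ => ((a + z) / (a - z)) * (g a : ℂ)) circleM := by
    refine Integrable.bdd_mul (c := 2/(1-r)) (hg.ofReal) hKmeas ?_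
    filter_upwards [ae_normSq circleM_compl_circle] with a ha
    exact abs_K_le ha hζ hr0 hr1
  have h := integral_re (μ := circleM)
    (f := fun a : ℂ => ((a + z) / (a - z)) * (g a : ℂ)) hintKg
  simp only [RCLike.re_to_complex] at h
  rw [← h]
  have hre : ∀ a : ℂ, (((a + z) / (a - z)) * (g a : ℂ)).re = Kre z a * g a := by
    intro a
    simp [Complex.mul_re, Complex.ofReal_re, Complex.ofReal_im, Kre]
  calc |∫ a, (((a + z) / (a - z)) * (g a : ℂ)).re ∂circleM|
      = |∫ a, Kre z a * g a ∂circleM| := by simp_rw [hre]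
    _ ≤ ∫ a, ‖Kre z a * g a‖ ∂circleM := by
        rw [← Real.norm_eq_abs]
        exact norm_integral_le_integral_norm _
    _ = ∫ a, Kre z a * |g a| ∂circleM := by
        refine integral_congr_ae ?_
        filter_upwards [ae_normSq circleM_compl_circle] with a ha
        rw [Real.norm_eq_abs, abs_mul, _root_.abs_of_nonneg (Kre_nonneg ha hζ hr0 hr1.le)]
    _ = (Pl (circleM.withDensity (fun a => ENNReal.ofReal |g a|)) z).toReal := by
        rw [integral_eq_lintegral_of_nonneg_ae]
        · congr 1
          have hwmeas : AEMeasurable (fun a : ℂ => ENNReal.ofReal |g a|) circleM := by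
            simpa [Real.norm_eq_abs] using (hg.aemeasurable.norm).ennreal_ofReal
          rw [Pl, lintegral_withDensity_eq_lintegral_mul₀ hwmeas
            (measurable_Kre z).ennreal_ofReal.aemeasurable]
          refine lintegral_congr_ae ?_
          filter_upwards [ae_normSq circleM_compl_circle] with a ha
          rw [Pi.mul_apply, ENNReal.ofReal_mul (Kre_nonneg ha hζ hr0 hr1.le), mul_comm]
        · filter_upwards [ae_normSq circleM_compl_circle] with a ha
          exact mul_nonneg (Kre_nonneg ha hζ hr0 hr1.le) (abs_nonneg _)
        · exact ((measurable_Kre z).aemeasurable.mul hg.aemeasurable.norm).aestronglyMeasurable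

lemma wd_compl (g : ℂ → ℝ) :
    (circleM.withDensity (fun a => ENNReal.ofReal |g a|)) unitCircleᶜ = 0 := by
  have hms : MeasurableSet unitCircle := Metric.isClosed_sphere.measurableSet
  rw [withDensity_apply _ hms.compl]
  exact setLIntegral_measure_zero _ _ circleM_compl_circle

lemma wd_finite (g : ℂ → ℝ) (hg : Integrable g circleM) :
    IsFiniteMeasure (circleM.withDensity (fun a => ENNReal.ofReal |g a|)) := by
  constructor
  rw [withDensity_apply _ MeasurableSet.univ, setLIntegral_univ]
  have h := (hasFiniteIntegral_iff_norm g).mp hg.2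
  refine lt_of_le_of_lt (le_of_eq (lintegral_congr fun a => ?_)) h
  rw [Real.norm_eq_abs]

end Stmt12Aux
end

open Stmt12Aux

/-- with `S_{μᵢ}` the singular inner functions of mutually singular
singular measures `μ₁, μ₂` on the circle and `O` the outer function of a real
`g ∈ L¹(∂𝔻, m)`, the function `f = (S_{μ₁}/S_{μ₂})·O` has radial limit `0` at `μ₁`-a.e.
point and radial limit `∞` (in modulus) at `μ₂`-a.e. point. -/
theorem stmt12 (μ₁ μ₂ : Measure ℂ) [IsFiniteMeasure μ₁] [IsFiniteMeasure μ₂]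
    (hμ₁circ : μ₁ unitCircleᶜ = 0) (hμ₂circ : μ₂ unitCircleᶜ = 0)
    (hsing₁ : MeasureTheory.Measure.MutuallySingular μ₁ circleM)
    (hsing₂ : MeasureTheory.Measure.MutuallySingular μ₂ circleM)
    (hmut : MeasureTheory.Measure.MutuallySingular μ₁ μ₂)
    (g : ℂ → ℝ) (hg : Integrable g circleM)
    (f : ℂ → ℂ)
    (hf : ∀ z : ℂ, f z = Complex.exp
      (-(∫ ζ, (ζ + z) / (ζ - z) ∂μ₁) + (∫ ζ, (ζ + z) / (ζ - z) ∂μ₂) +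
        ∫ ζ, ((ζ + z) / (ζ - z)) * (g ζ : ℂ) ∂circleM)) :
    (∀ᵐ ζ ∂μ₁,
      Filter.Tendsto (fun r : ℝ => f ((r : ℂ) * ζ)) (𝓝[<] (1:ℝ)) (𝓝 0)) ∧
    (∀ᵐ ζ ∂μ₂,
      Filter.Tendsto (fun r : ℝ => ‖f ((r : ℂ) * ζ)‖) (𝓝[<] (1:ℝ)) atTop) := by
  set wd : Measure ℂ := circleM.withDensity (fun a => ENNReal.ofReal |g a|) with hwddef
  haveI : IsFiniteMeasure wd := wd_finite g hg
  have hwdc : wd unitCircleᶜ = 0 := wd_compl g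
  have hwdac : wd ≪ circleM := withDensity_absolutelyContinuous _ _
  have hν₁c : (μ₂ + wd) unitCircleᶜ = 0 := by
    simp [Measure.add_apply, hμ₂circ, hwdc]
  have hν₂c : (μ₁ + wd) unitCircleᶜ = 0 := by
    simp [Measure.add_apply, hμ₁circ, hwdc]
  -- bounds on the real part of the exponent
  have hre_bounds : ∀ (ζ : ℂ), normSq ζ = 1 → ∀ r : ℝ, 0 ≤ r → r < 1 →
      ((-(∫ a, (a + ((r:ℂ)*ζ)) / (a - ((r:ℂ)*ζ)) ∂μ₁)
        + (∫ a, (a + ((r:ℂ)*ζ)) / (a - ((r:ℂ)*ζ)) ∂μ₂)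
        + ∫ a, ((a + ((r:ℂ)*ζ)) / (a - ((r:ℂ)*ζ))) * (g a : ℂ) ∂circleM).re
          ≤ (Pl (μ₂ + wd) ((r:ℂ)*ζ)).toReal - (Pl μ₁ ((r:ℂ)*ζ)).toReal)
      ∧ ((Pl μ₂ ((r:ℂ)*ζ)).toReal - (Pl (μ₁ + wd) ((r:ℂ)*ζ)).toReal
          ≤ (-(∫ a, (a + ((r:ℂ)*ζ)) / (a - ((r:ℂ)*ζ)) ∂μ₁)
        + (∫ a, (a + ((r:ℂ)*ζ)) / (a - ((r:ℂ)*ζ)) ∂μ₂)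
        + ∫ a, ((a + ((r:ℂ)*ζ)) / (a - ((r:ℂ)*ζ))) * (g a : ℂ) ∂circleM).re) := by
    intro ζ hζ r hr0 hr1
    have e1 := re_integral_eq μ₁ hμ₁circ hζ hr0 hr1
    have e2 := re_integral_eq μ₂ hμ₂circ hζ hr0 hr1
    have e3 := g_re_integral_le g hg hζ hr0 hr1
    rw [← hwddef] at e3
    have hadd2 : (Pl (μ₂ + wd) ((r:ℂ)*ζ)).toReal
        = (Pl μ₂ ((r:ℂ)*ζ)).toReal + (Pl wd ((r:ℂ)*ζ)).toReal := by
      have h : Pl (μ₂ + wd) ((r:ℂ)*ζ) = Pl μ₂ ((r:ℂ)*ζ) + Pl wd ((r:ℂ)*ζ) :=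
        lintegral_add_measure _ _ _
      rw [h, ENNReal.toReal_add (Pl_ne_top μ₂ hμ₂circ hζ hr0 hr1)
        (Pl_ne_top wd hwdc hζ hr0 hr1)]
    have hadd1 : (Pl (μ₁ + wd) ((r:ℂ)*ζ)).toReal
        = (Pl μ₁ ((r:ℂ)*ζ)).toReal + (Pl wd ((r:ℂ)*ζ)).toReal := by
      have h : Pl (μ₁ + wd) ((r:ℂ)*ζ) = Pl μ₁ ((r:ℂ)*ζ) + Pl wd ((r:ℂ)*ζ) :=
        lintegral_add_measure _ _ _
      rw [h, ENNReal.toReal_add (Pl_ne_top μ₁ hμ₁circ hζ hr0 hr1)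
        (Pl_ne_top wd hwdc hζ hr0 hr1)]
    obtain ⟨hge, hle⟩ := abs_le.mp e3
    rw [Complex.add_re, Complex.add_re, Complex.neg_re, e1, e2]
    constructor
    · rw [hadd2]; linarith
    · rw [hadd1]; linarith
  constructor
  · -- radial limit 0, μ₁-a.e.
    have hsingν : (μ₂ + wd) ⟂ₘ μ₁ :=
      Measure.MutuallySingular.add_left hmut.symm
        (hsing₁.symm.mono_ac hwdac Measure.AbsolutelyContinuous.rfl)
    have hrn1 : (μ₂ + wd).rnDeriv μ₁ =ᵐ[μ₁] 0 := (Measure.rnDeriv_eq_zero _ _).mpr hsingν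
    have hrn2 : circleM.rnDeriv μ₁ =ᵐ[μ₁] 0 := (Measure.rnDeriv_eq_zero _ _).mpr hsing₁.symm
    filter_upwards [Besicovitch.ae_tendsto_rnDeriv (μ₂ + wd) μ₁,
      Besicovitch.ae_tendsto_rnDeriv circleM μ₁, hrn1, hrn2,
      ae_normSq hμ₁circ] with ζ hb1 hb2 hz1 hz2 hζ
    rw [hz1] at hb1
    rw [hz2] at hb2
    simp only [Pi.zero_apply] at hb1 hb2
    have hmain := main_pt μ₁ (μ₂ + wd) hμ₁circ hν₁c hζ hb1 hb2
    rw [tendsto_zero_iff_norm_tendsto_zero]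
    refine squeeze_zero' (Eventually.of_forall fun r => norm_nonneg _) ?_
      (Real.tendsto_exp_atBot.comp hmain)
    filter_upwards [Ioo_mem_nhdsLT_of_mem
      (show (1:ℝ) ∈ Ioc (0:ℝ) 1 from ⟨one_pos, le_rfl⟩)] with r hr
    rw [hf, Complex.norm_exp]
    exact Real.exp_le_exp.mpr ((hre_bounds ζ hζ r hr.1.le hr.2).1)
  · -- radial limit ∞ in modulus, μ₂-a.e.
    have hsingν : (μ₁ + wd) ⟂ₘ μ₂ :=
      Measure.MutuallySingular.add_left hmut
        (hsing₂.symm.mono_ac hwdac Measure.AbsolutelyContinuous.rfl)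
    have hrn1 : (μ₁ + wd).rnDeriv μ₂ =ᵐ[μ₂] 0 := (Measure.rnDeriv_eq_zero _ _).mpr hsingν
    have hrn2 : circleM.rnDeriv μ₂ =ᵐ[μ₂] 0 := (Measure.rnDeriv_eq_zero _ _).mpr hsing₂.symm
    filter_upwards [Besicovitch.ae_tendsto_rnDeriv (μ₁ + wd) μ₂,
      Besicovitch.ae_tendsto_rnDeriv circleM μ₂, hrn1, hrn2,
      ae_normSq hμ₂circ] with ζ hb1 hb2 hz1 hz2 hζ
    rw [hz1] at hb1
    rw [hz2] at hb2
    simp only [Pi.zero_apply] at hb1 hb2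
    have hmain := main_pt μ₂ (μ₁ + wd) hμ₂circ hν₂c hζ hb1 hb2
    have hmain' : Tendsto (fun r : ℝ =>
        (Pl μ₂ ((r:ℂ)*ζ)).toReal - (Pl (μ₁ + wd) ((r:ℂ)*ζ)).toReal) (𝓝[<] (1:ℝ)) atTop := by
      simpa [neg_sub] using tendsto_neg_atTop_iff.mpr hmain
    have hEtend : Tendsto (fun r : ℝ =>
        (-(∫ a, (a + ((r:ℂ)*ζ)) / (a - ((r:ℂ)*ζ)) ∂μ₁)
        + (∫ a, (a + ((r:ℂ)*ζ)) / (a - ((r:ℂ)*ζ)) ∂μ₂)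
        + ∫ a, ((a + ((r:ℂ)*ζ)) / (a - ((r:ℂ)*ζ))) * (g a : ℂ) ∂circleM).re)
        (𝓝[<] (1:ℝ)) atTop := by
      refine tendsto_atTop_mono' _ ?_ hmain'
      filter_upwards [Ioo_mem_nhdsLT_of_mem
        (show (1:ℝ) ∈ Ioc (0:ℝ) 1 from ⟨one_pos, le_rfl⟩)] with r hr
      exact (hre_bounds ζ hζ r hr.1.le hr.2).2
    refine (Real.tendsto_exp_atTop.comp hEtend).congr fun r => ?_
    rw [Function.comp_apply, hf, Complex.norm_exp]
end

section
/- Let F be an inner function, let V be a Jordan domain whose closure is contained in 𝔻, and let U be a connected component of F⁻¹(V) ⊆ 𝔻. Then the domains U and ℂ ∖ closure(U) have the same topological boundary: ∂U = ∂(ℂ ∖ closure(U)). -/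
open MeasureTheory Filter Set Metric Topology Complex
open scoped ENNReal

namespace Stmt14Aux

/-- A point close to a nonzero point, relative error < 1, is in the slit plane after division. -/
lemma div_mem_slitPlane {u c : ℂ} (hc : c ≠ 0) (h : ‖u - c‖ < ‖c‖) :
    u / c ∈ Complex.slitPlane := by
  rw [Complex.mem_slitPlane_iff]
  left
  have h1 : ‖u / c - 1‖ < 1 := by
    have : u / c - 1 = (u - c) / c := by field_simp
    rw [this, norm_div]
    rw [div_lt_one (norm_pos_iff.mpr hc)]
    exact h
  have h2 : |(u / c - 1).re| ≤ ‖u / c - 1‖ := Complex.abs_re_le_norm _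
  have h3 : (u / c - 1).re = (u / c).re - 1 := by simp
  nlinarith [abs_nonneg ((u / c - 1).re), neg_abs_le ((u / c - 1).re)]

lemma div_ne_zero_of_close {u c : ℂ} (hc : c ≠ 0) (h : ‖u - c‖ < ‖c‖) :
    u ≠ 0 := by
  intro h0
  subst h0
  simp only [zero_sub, norm_neg] at h
  exact lt_irrefl _ h

/-- Continuous logarithm along a compact interval for a nonvanishing continuous function. -/
lemma exists_lift {a b : ℝ} (hab : a ≤ b) {G : ℝ → ℂ}
    (hG : ContinuousOn G (Icc a b)) (hG0 : ∀ t ∈ Icc a b, G t ≠ 0) :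
    ∃ L : ℝ → ℂ, ContinuousOn L (Icc a b) ∧ ∀ t ∈ Icc a b, Complex.exp (L t) = G t := by
  -- minimum of |G|
  obtain ⟨tm, htm, hmin⟩ := isCompact_Icc.exists_isMinOn (nonempty_Icc.mpr hab)
    (continuous_norm.comp_continuousOn hG)
  set m : ℝ := ‖G tm‖ with hm
  have hmpos : 0 < m := norm_pos_iff.mpr (hG0 tm htm)
  -- uniform continuity
  have huc := isCompact_Icc.uniformContinuousOn_of_continuous hG
  rw [Metric.uniformContinuousOn_iff] at huc
  obtain ⟨δ, hδpos, hδ⟩ := huc m hmpos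
  -- number of pieces
  obtain ⟨n, hn⟩ := exists_nat_gt ((b - a) / δ)
  have hn1 : (0:ℝ) < n + 1 := by positivity
  set h : ℝ := (b - a) / (n + 1) with hh
  have hhsmall : h < δ := by
    have h1 : b - a < ((n:ℝ)+1) * δ := by
      have h2 : (b - a) / δ < (n:ℝ) + 1 := lt_trans hn (lt_add_one _)
      have := (div_lt_iff₀ hδpos).mp h2
      linarith
    rw [hh, div_lt_iff₀ hn1]
    nlinarith
  have hhnn : 0 ≤ h := by
    apply div_nonneg (by linarith) (by linarith)
  set x : ℕ → ℝ := fun k => a + k * h with hx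
  have hxmono : ∀ k : ℕ, x k ≤ x (k+1) := by
    intro k
    simp only [hx]
    push_cast
    nlinarith
  have hxb : ∀ k : ℕ, k ≤ n + 1 → x k ≤ b := by
    intro k hk
    simp only [hx, hh]
    have : (k:ℝ) ≤ (n:ℝ) + 1 := by exact_mod_cast hk
    have h2 : (k:ℝ) * ((b-a)/(n+1)) ≤ ((n:ℝ)+1) * ((b-a)/(n+1)) := by
      apply mul_le_mul_of_nonneg_right this
      positivity
    have h3 : ((n:ℝ)+1) * ((b-a)/(n+1)) = b - a := by field_simp
    linarith
  have hxa : ∀ k : ℕ, a ≤ x k := by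
    intro k
    simp only [hx]
    have : 0 ≤ (k:ℝ) * h := mul_nonneg (Nat.cast_nonneg k) hhnn
    linarith
  have hxlast : x (n+1) = b := by
    simp only [hx, hh]
    push_cast
    field_simp
    ring
  -- main induction
  have main : ∀ k : ℕ, k ≤ n + 1 → ∃ L : ℝ → ℂ,
      ContinuousOn L (Icc a (x k)) ∧ ∀ t ∈ Icc a (x k), Complex.exp (L t) = G t := by
    intro k
    induction k with
    | zero =>
      intro _
      refine ⟨fun _ => Complex.log (G a), continuousOn_const, ?_⟩
      intro t ht
      have hx0 : x 0 = a := by simp [hx]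
      rw [hx0] at ht
      have : t = a := le_antisymm ht.2 ht.1
      subst this
      exact Complex.exp_log (hG0 t ⟨le_refl _, hab⟩)
    | succ k ih =>
      intro hk1
      obtain ⟨L, hL, hLe⟩ := ih (by omega)
      set c : ℝ := x k with hc
      set d : ℝ := x (k+1) with hd
      have hcd : c ≤ d := hxmono k
      have hcIcc : c ∈ Icc a b := ⟨hxa k, hxb k (by omega)⟩
      have hdb : d ≤ b := hxb (k+1) hk1
      have hGc : G c ≠ 0 := hG0 c hcIcc
      have hmc : m ≤ ‖G c‖ := by simpa using hmin hcIcc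
      -- on piece, close to G c
      have hclose : ∀ s ∈ Icc c d, ‖G s - G c‖ < ‖G c‖ := by
        intro s hs
        have hsIcc : s ∈ Icc a b := ⟨le_trans (hxa k) hs.1, le_trans hs.2 hdb⟩
        have hdist : dist s c < δ := by
          rw [Real.dist_eq, _root_.abs_of_nonneg (by linarith [hs.1] : (0:ℝ) ≤ s - c)]
          have hdc : d - c = h := by simp only [hd, hc, hx]; push_cast; ring
          linarith [hs.2]
        have := hδ s hsIcc c hcIcc hdist
        rw [dist_eq_norm] at this
        calc ‖G s - G c‖ = ‖G s - G c‖ := rfl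
        _ < m := this
        _ ≤ ‖G c‖ := hmc
      set R : ℝ → ℂ := fun s => L c + Complex.log (G s / G c) with hR
      set L' : ℝ → ℂ := fun s => if s ≤ c then L s else R s with hL'
      have hIccsplit : Icc a d = Icc a c ∪ Icc c d := (Icc_union_Icc_eq_Icc (hxa k) hcd).symm
      have hagree1 : ∀ y ∈ Icc a c, L' y = L y := by
        intro y hy
        simp only [hL']
        rw [if_pos hy.2]
      have hagree2 : ∀ y ∈ Icc c d, L' y = R y := by
        intro y hy
        simp only [hL']
        by_cases hyc : y ≤ c
        · have : y = c := le_antisymm hyc hy.1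
          subst this
          rw [if_pos le_rfl]
          simp only [hR]
          rw [div_self hGc, Complex.log_one, add_zero]
        · rw [if_neg hyc]
      have hRcont : ContinuousOn R (Icc c d) := by
        apply ContinuousOn.add continuousOn_const
        intro s hs
        exact ((hG.mono (Icc_subset_Icc (hxa k) hdb) s hs).div_const _).clog
          (div_mem_slitPlane hGc (hclose s hs))
      have hL'cont : ContinuousOn L' (Icc a d) := by
        rw [hIccsplit]
        intro t ht
        have c1 : ContinuousWithinAt L' (Icc a c) t := by
          by_cases htc : t ∈ Icc a c
          · exact (hL t htc).congr hagree1 (hagree1 t htc)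
          · exact continuousWithinAt_of_notMem_closure (by rwa [closure_Icc])
        have c2 : ContinuousWithinAt L' (Icc c d) t := by
          by_cases htc : t ∈ Icc c d
          · exact (hRcont t htc).congr hagree2 (hagree2 t htc)
          · exact continuousWithinAt_of_notMem_closure (by rwa [closure_Icc])
        exact c1.union c2
      refine ⟨L', hL'cont, ?_⟩
      intro t ht
      rw [hIccsplit] at ht
      rcases ht with ht | ht
      · rw [hagree1 t ht]; exact hLe t ht
      · rw [hagree2 t ht]
        simp only [hR]
        rw [Complex.exp_add, hLe c ⟨hxa k, le_rfl⟩,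
          Complex.exp_log (div_ne_zero (hG0 t ⟨le_trans (hxa k) ht.1, le_trans ht.2 hdb⟩) hGc)]
        field_simp
  obtain ⟨L, h1, h2⟩ := main (n+1) le_rfl
  rw [hxlast] at h1 h2
  exact ⟨L, h1, h2⟩


noncomputable section

/-- The interval `[0, 2π]`. -/
def II : Set ℝ := Icc 0 (2 * Real.pi)

lemma two_pi_pos : (0:ℝ) < 2 * Real.pi := by positivity

lemma zero_mem_II : (0:ℝ) ∈ II := ⟨le_refl _, le_of_lt two_pi_pos⟩

lemma two_pi_mem_II : (2 * Real.pi) ∈ II := ⟨le_of_lt two_pi_pos, le_refl _⟩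

/-- Whether a loop has a continuous logarithm on `[0,2π]`. -/
def HasLift (G : ℝ → ℂ) (L : ℝ → ℂ) : Prop :=
  ContinuousOn L II ∧ ∀ t ∈ II, Complex.exp (L t) = G t

/-- The winding increment of a loop over `[0, 2π]`. -/
def Wind (G : ℝ → ℂ) : ℂ :=
  haveI := Classical.propDecidable (∃ L, HasLift G L)
  if h : ∃ L, HasLift G L then h.choose (2 * Real.pi) - h.choose 0 else 0

/-- connected subsets of `2πℤ`-valued reals are single valued -/
lemma lattice_subsingleton {S : Set ℝ} (hS : IsPreconnected S)
    (hsub : ∀ y ∈ S, ∃ n : ℤ, y = 2 * Real.pi * n) :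
    ∀ y₁ ∈ S, ∀ y₂ ∈ S, y₁ = y₂ := by
  intro y₁ h₁ y₂ h₂
  by_contra hne
  wlog hlt : y₁ < y₂ generalizing y₁ y₂
  · exact this y₂ h₂ y₁ h₁ (Ne.symm hne) (lt_of_le_of_ne (not_lt.mp hlt) (Ne.symm hne))
  obtain ⟨n₁, hn₁⟩ := hsub y₁ h₁
  obtain ⟨n₂, hn₂⟩ := hsub y₂ h₂
  have hn12 : n₁ < n₂ := by
    have : (n₁:ℝ) < n₂ := by
      have hpi := Real.pi_pos
      nlinarith
    exact_mod_cast this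
  have hmid : y₁ + Real.pi ∈ S := by
    have := hS.ordConnected.out h₁ h₂
    apply this
    constructor
    · linarith [Real.pi_pos]
    · have : (n₁:ℝ) + 1 ≤ n₂ := by exact_mod_cast hn12
      have hpi := Real.pi_pos
      nlinarith
  obtain ⟨n₃, hn₃⟩ := hsub _ hmid
  rw [hn₁] at hn₃
  have : 2 * (n₁:ℝ) + 1 = 2 * (n₃:ℝ) := by
    have hpi := Real.pi_ne_zero
    have h5 : Real.pi * (2 * (n₁:ℝ) + 1) = Real.pi * (2 * (n₃:ℝ)) := by ring_nf; ring_nf at hn₃; linarith [hn₃]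
    exact mul_left_cancel₀ hpi h5
  have : 2 * n₁ + 1 = 2 * n₃ := by exact_mod_cast this
  omega

/-- any lift computes `Wind`. -/
lemma wind_eq {G L : ℝ → ℂ} (h : HasLift G L) :
    Wind G = L (2 * Real.pi) - L 0 := by
  classical
  have hex : ∃ L, HasLift G L := ⟨L, h⟩
  rw [Wind]
  rw [dif_pos hex]
  set L' : ℝ → ℂ := hex.choose with hL'
  have h' : HasLift G L' := hex.choose_spec
  -- difference is constant
  set D : ℝ → ℂ := fun t => L' t - L t with hD
  have hDcont : ContinuousOn D II := h'.1.sub h.1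
  have hDlat : ∀ t ∈ II, ∃ n : ℤ, D t = n * (2 * Real.pi * Complex.I) := by
    intro t ht
    rw [← Complex.exp_eq_one_iff, hD]
    simp only
    rw [Complex.exp_sub, h'.2 t ht, h.2 t ht, div_self]
    rw [← h.2 t ht]
    exact Complex.exp_ne_zero _
  have hDim : ∀ t ∈ II, ∃ n : ℤ, (D t).im = 2 * Real.pi * n ∧ (D t).re = 0 := by
    intro t ht
    obtain ⟨n, hn⟩ := hDlat t ht
    refine ⟨n, ?_, ?_⟩ <;> rw [hn] <;> simp <;> ring
  have hconn : IsPreconnected ((fun t => (D t).im) '' II) := by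
    apply IsPreconnected.image isPreconnected_Icc
    exact Complex.continuous_im.comp_continuousOn hDcont
  have hkey : (D 0).im = (D (2*Real.pi)).im := by
    apply lattice_subsingleton hconn
    · rintro y ⟨t, ht, rfl⟩
      obtain ⟨n, hn, -⟩ := hDim t ht
      exact ⟨n, hn⟩
    · exact mem_image_of_mem _ zero_mem_II
    · exact mem_image_of_mem _ two_pi_mem_II
  have hre0 : (D 0).re = 0 := (hDim 0 zero_mem_II).choose_spec.2
  have hre2 : (D (2*Real.pi)).re = 0 := (hDim _ two_pi_mem_II).choose_spec.2
  have hDeq : D 0 = D (2*Real.pi) := by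
    apply Complex.ext
    · rw [hre0, hre2]
    · exact hkey
  have : L' 0 - L 0 = L' (2*Real.pi) - L (2*Real.pi) := hDeq
  -- rearrange
  have goal : L' (2*Real.pi) - L' 0 = L (2*Real.pi) - L 0 := by
    have := hDeq
    simp only [hD] at this
    linear_combination -this
  exact goal

/-- small perturbations of a constant have zero winding. -/
lemma wind_eq_zero_of_close {G : ℝ → ℂ} {c : ℂ} (hc : c ≠ 0)
    (hG : ContinuousOn G II) (hper : G (2*Real.pi) = G 0)
    (h : ∀ t ∈ II, ‖G t - c‖ < ‖c‖) :
    Wind G = 0 := by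
  have hlift : HasLift G (fun t => Complex.log c + Complex.log (G t / c)) := by
    constructor
    · apply ContinuousOn.add continuousOn_const
      intro s hs
      exact ((hG s hs).div_const _).clog (div_mem_slitPlane hc (h s hs))
    · intro t ht
      rw [Complex.exp_add, Complex.exp_log hc,
        Complex.exp_log (div_ne_zero (div_ne_zero_of_close hc (h t ht)) hc)]
      field_simp
  rw [wind_eq hlift, hper]
  ring

/-- winding of a pointwise product. -/
lemma wind_mul {G H : ℝ → ℂ}
    (hG : ContinuousOn G II) (hG0 : ∀ t ∈ II, G t ≠ 0)
    (hH : ContinuousOn H II) (hH0 : ∀ t ∈ II, H t ≠ 0) :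
    Wind (fun t => G t * H t) = Wind G + Wind H := by
  obtain ⟨LG, hLG, hLGe⟩ := exists_lift (le_of_lt two_pi_pos) hG hG0
  obtain ⟨LH, hLH, hLHe⟩ := exists_lift (le_of_lt two_pi_pos) hH hH0
  have h1 : HasLift G LG := ⟨hLG, hLGe⟩
  have h2 : HasLift H LH := ⟨hLH, hLHe⟩
  have h3 : HasLift (fun t => G t * H t) (fun t => LG t + LH t) := by
    constructor
    · exact hLG.add hLH
    · intro t ht
      rw [Complex.exp_add, hLGe t ht, hLHe t ht]
  rw [wind_eq h1, wind_eq h2, wind_eq h3]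
  ring

/-- winding agrees for functions that agree on `[0,2π]`. -/
lemma wind_congr {G G' : ℝ → ℂ} (h : ∀ t ∈ II, G t = G' t) : Wind G = Wind G' := by
  have hiff : ∀ L, HasLift G L ↔ HasLift G' L := by
    intro L
    constructor <;> rintro ⟨h1, h2⟩ <;> refine ⟨h1, fun t ht => ?_⟩
    · rw [← h t ht]; exact h2 t ht
    · rw [h t ht]; exact h2 t ht
  by_cases hex : ∃ L, HasLift G L
  · obtain ⟨L, hL⟩ := hex
    rw [wind_eq hL, wind_eq ((hiff L).mp hL)]
  · have hex' : ¬ ∃ L, HasLift G' L := by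
      rintro ⟨L, hL⟩
      exact hex ⟨L, (hiff L).mpr hL⟩
    classical
    rw [Wind, Wind]
    rw [dif_neg hex, dif_neg hex']

/-- stability of winding under pointwise-dominated perturbation. -/
lemma wind_eq_of_close {G G' : ℝ → ℂ}
    (hG : ContinuousOn G II) (hG0 : ∀ t ∈ II, G t ≠ 0)
    (hG' : ContinuousOn G' II)
    (hperG : G (2*Real.pi) = G 0) (hperG' : G' (2*Real.pi) = G' 0)
    (hclose : ∀ t ∈ II, ‖G' t - G t‖ < ‖G t‖) :
    Wind G' = Wind G := by
  set H : ℝ → ℂ := fun t => G' t / G t with hH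
  have hH0 : ∀ t ∈ II, H t ≠ 0 := by
    intro t ht
    exact div_ne_zero (div_ne_zero_of_close (hG0 t ht) (hclose t ht)) (hG0 t ht)
  have hHcont : ContinuousOn H II := hG'.div hG hG0
  have hGH : ∀ t ∈ II, G t * H t = G' t := by
    intro t ht
    simp only [hH]
    rw [mul_comm, div_mul_cancel₀ _ (hG0 t ht)]
  have hwH : Wind H = 0 := by
    apply wind_eq_zero_of_close (c := 1) one_ne_zero hHcont
    · show G' (2*Real.pi) / G (2*Real.pi) = G' 0 / G 0
      rw [hperG, hperG']
    · intro t ht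
      have h1 : H t - 1 = (G' t - G t) / G t := by
        show G' t / G t - 1 = _
        rw [div_sub_one (hG0 t ht)]
      rw [h1, norm_div, norm_one]
      rw [div_lt_one (norm_pos_iff.mpr (hG0 t ht))]
      exact hclose t ht
  have := wind_mul hG hG0 hHcont hH0
  rw [wind_congr hGH] at this
  rw [this, hwH, add_zero]

/-- winding of `r e^{it}` is `2πi`. -/
lemma wind_circle {r : ℝ} (hr : 0 < r) :
    Wind (fun t => (r:ℂ) * Complex.exp (t * Complex.I)) = 2 * Real.pi * Complex.I := by
  have hlift : HasLift (fun t => (r:ℂ) * Complex.exp (t * Complex.I))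
      (fun t => (Real.log r : ℂ) + t * Complex.I) := by
    constructor
    · apply ContinuousOn.add continuousOn_const
      exact (Complex.continuous_ofReal.mul continuous_const).continuousOn
    · intro t ht
      rw [Complex.exp_add, ← Complex.ofReal_exp, Real.exp_log hr]
  rw [wind_eq hlift]
  push_cast
  ring

/-- The exponential-patch argument: if a compact set `K` admits a continuous logarithm of
`z - w` and `w ∉ K`, then the connected component of `w` in `Kᶜ` cannot be bounded. -/
lemma no_bounded_comp {K : Set ℂ} (hKc : IsCompact K) {w : ℂ} (hwK : w ∉ K)
    {L : ℂ → ℂ} (hL : ContinuousOn L K) (hexp : ∀ z ∈ K, Complex.exp (L z) = z - w)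
    {R : ℝ} (hR : 0 < R)
    (hsub : connectedComponentIn Kᶜ w ∪ K ⊆ ball w R) : False := by
  classical
  set C := connectedComponentIn Kᶜ w with hCdef
  have hKclosed : IsClosed K := hKc.isClosed
  have hKcopen : IsOpen Kᶜ := hKclosed.isOpen_compl
  have hwKc : w ∈ Kᶜ := hwK
  have hCopen : IsOpen C := hKcopen.connectedComponentIn
  have hwC : w ∈ C := mem_connectedComponentIn hwKc
  have hfrC : frontier C ⊆ K := by
    intro y hy
    by_contra hyK
    have hyKc : y ∈ Kᶜ := hyK
    have hynotC : y ∉ C := by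
      intro hyC
      exact hy.2 (by rwa [hCopen.interior_eq])
    have hycl : y ∈ closure C := hy.1
    have hyopen : IsOpen (connectedComponentIn Kᶜ y) := hKcopen.connectedComponentIn
    obtain ⟨c, hc1, hc2⟩ := mem_closure_iff_nhds.mp hycl _
      (hyopen.mem_nhds (mem_connectedComponentIn hyKc))
    have e1 : connectedComponentIn Kᶜ y = connectedComponentIn Kᶜ c := connectedComponentIn_eq hc1
    have e2 : connectedComponentIn Kᶜ w = connectedComponentIn Kᶜ c := connectedComponentIn_eq hc2
    apply hynotC
    rw [hCdef, e2, ← e1]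
    exact mem_connectedComponentIn hyKc
  -- Tietze extension of the logarithm
  have hLrest : Continuous (K.restrict L) := continuousOn_iff_continuous_restrict.mp hL
  obtain ⟨g, hg⟩ := ContinuousMap.exists_restrict_eq (Y := ℂ) hKclosed ⟨K.restrict L, hLrest⟩
  have hgK : ∀ z ∈ K, g z = L z := by
    intro z hz
    exact DFunLike.congr_fun hg ⟨z, hz⟩
  -- the patched function
  set F : ℂ → ℂ := C.piecewise (fun z => Complex.exp (g z)) (fun z => z - w) with hF
  have hFcont : Continuous F := by
    apply Continuous.piecewise
    · intro a ha
      have haK : a ∈ K := hfrC ha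
      rw [hgK a haK]
      exact hexp a haK
    · exact Complex.continuous_exp.comp g.continuous
    · exact continuous_id.sub continuous_const
  have hF0 : ∀ z, F z ≠ 0 := by
    intro z
    by_cases hz : z ∈ C
    · rw [hF, Set.piecewise_eq_of_mem _ _ _ hz]
      exact Complex.exp_ne_zero _
    · rw [hF, Set.piecewise_eq_of_notMem _ _ _ hz]
      intro h0
      exact hz ((sub_eq_zero.mp h0) ▸ hwC)
  have hFout : ∀ z, z ∉ C → F z = z - w := fun z hz => Set.piecewise_eq_of_notMem _ _ _ hz
  -- the circle loops
  set Φ : ℝ → ℝ → ℂ := fun r t => F (w + r * Complex.exp (t * Complex.I)) with hΦ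
  have habs : ∀ (r t : ℝ), ‖(r:ℂ) * Complex.exp (t * Complex.I)‖ = |r| := by
    intro r t
    rw [norm_mul, Complex.norm_exp_ofReal_mul_I, mul_one, Complex.norm_real, Real.norm_eq_abs]
  have hmem : ∀ r ∈ Icc (0:ℝ) R, ∀ t : ℝ,
      w + r * Complex.exp (t * Complex.I) ∈ closedBall w R := by
    intro r hr t
    rw [mem_closedBall, dist_eq_norm, add_sub_cancel_left]
    show ‖_‖ ≤ R
    rw [habs r t, _root_.abs_of_nonneg hr.1]
    exact hr.2
  have hΦcont : ∀ r : ℝ, Continuous (Φ r) := by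
    intro r
    apply hFcont.comp
    exact continuous_const.add (continuous_const.mul
      (Complex.continuous_exp.comp (Complex.continuous_ofReal.mul continuous_const)))
  have hΦper : ∀ r : ℝ, Φ r (2 * Real.pi) = Φ r 0 := by
    intro r
    simp only [hΦ]
    congr 2
    have h1 : ((2 * Real.pi : ℝ) : ℂ) * Complex.I = 2 * (Real.pi : ℂ) * Complex.I := by
      push_cast; ring
    rw [h1, Complex.exp_two_pi_mul_I]
    norm_num
  have hΦ0 : ∀ r t, Φ r t ≠ 0 := fun r t => hF0 _
  -- minimum of |F| on the closed ball
  obtain ⟨zm, hzm, hzmin⟩ := (isCompact_closedBall w R).exists_isMinOn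
    ⟨w, mem_closedBall_self (le_of_lt hR)⟩
    (continuous_norm.comp_continuousOn hFcont.continuousOn)
  set m := ‖F zm‖ with hmdef
  have hm0 : 0 < m := norm_pos_iff.mpr (hF0 zm)
  have huc := (isCompact_closedBall w R).uniformContinuousOn_of_continuous hFcont.continuousOn
  rw [Metric.uniformContinuousOn_iff] at huc
  obtain ⟨δ, hδ0, hδ⟩ := huc m hm0
  -- one step of the radial homotopy
  have hstep : ∀ r r', r ∈ Icc (0:ℝ) R → r' ∈ Icc (0:ℝ) R → |r - r'| < δ →
      Wind (Φ r') = Wind (Φ r) := by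
    intro r r' hr hr' hrr
    apply wind_eq_of_close (hΦcont r).continuousOn (fun t _ => hΦ0 r t)
      (hΦcont r').continuousOn (hΦper r) (hΦper r')
    intro t ht
    have h1 : dist (w + r' * Complex.exp (t * Complex.I)) (w + r * Complex.exp (t * Complex.I))
        = |r' - r| := by
      rw [dist_eq_norm]
      have : (w + r' * Complex.exp (t * Complex.I)) - (w + r * Complex.exp (t * Complex.I))
          = ((r' - r : ℝ) : ℂ) * Complex.exp (t * Complex.I) := by push_cast; ring
      rw [this]
      show ‖_‖ = _
      rw [habs]
    have h2 := hδ _ (hmem r' hr' t) _ (hmem r hr t)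
      (by rw [h1, abs_sub_comm]; exact hrr)
    rw [Complex.dist_eq] at h2
    have h3 : m ≤ ‖Φ r t‖ := by simpa using hzmin (hmem r hr t)
    calc ‖Φ r' t - Φ r t‖ < m := h2
    _ ≤ ‖Φ r t‖ := h3
  -- base: zero radius
  have hW0 : Wind (Φ 0) = 0 := by
    apply wind_eq_zero_of_close (c := F w) (hF0 w) (hΦcont 0).continuousOn (hΦper 0)
    intro t ht
    have : Φ 0 t = F w := by simp [hΦ]
    rw [this, sub_self, norm_zero]
    exact norm_pos_iff.mpr (hF0 w)
  -- top: radius R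
  have hWR : Wind (Φ R) = 2 * Real.pi * Complex.I := by
    have hcong : ∀ t ∈ II, Φ R t = (R:ℂ) * Complex.exp (t * Complex.I) := by
      intro t ht
      have hout : (w + R * Complex.exp (t * Complex.I)) ∉ C := by
        intro hin
        have hball := hsub (Or.inl hin)
        rw [mem_ball, dist_eq_norm, add_sub_cancel_left] at hball
        have : ‖(R:ℂ) * Complex.exp (t * Complex.I)‖ = R := by
          rw [habs, _root_.abs_of_nonneg (le_of_lt hR)]
        rw [show ‖(R:ℂ) * Complex.exp (t * Complex.I)‖ = ‖(R:ℂ) * Complex.exp (t * Complex.I)‖ from rfl, this] at hball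
        exact lt_irrefl _ hball
      rw [hΦ]
      simp only
      rw [hFout _ hout, add_sub_cancel_left]
    rw [wind_congr hcong]
    exact wind_circle hR
  -- chain the radii
  obtain ⟨n, hn⟩ := exists_nat_gt (R / δ)
  have hn1 : (0:ℝ) < n + 1 := by positivity
  set ρ : ℕ → ℝ := fun k => k * (R / (n+1)) with hρ
  have hρmem : ∀ k : ℕ, k ≤ n + 1 → ρ k ∈ Icc (0:ℝ) R := by
    intro k hk
    constructor
    · apply mul_nonneg (Nat.cast_nonneg k)
      positivity
    · have h1 : (k:ℝ) ≤ (n:ℝ)+1 := by exact_mod_cast hk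
      have h2 : (k:ℝ) * (R/(n+1)) ≤ ((n:ℝ)+1) * (R/(n+1)) := by
        apply mul_le_mul_of_nonneg_right h1
        positivity
      have h3 : ((n:ℝ)+1) * (R/(n+1)) = R := by field_simp
      simp only [hρ]
      linarith
  have hρstep : ∀ k : ℕ, |ρ (k+1) - ρ k| < δ := by
    intro k
    have h1 : ρ (k+1) - ρ k = R/(n+1) := by
      simp only [hρ]
      push_cast
      ring
    rw [h1, _root_.abs_of_nonneg (by positivity : (0:ℝ) ≤ R/(n+1))]
    have h2 : R < ((n:ℝ)+1) * δ := by
      have h3 : R/δ < (n:ℝ)+1 := lt_trans hn (lt_add_one _)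
      have := (div_lt_iff₀ hδ0).mp h3
      linarith
    rw [div_lt_iff₀ hn1]
    nlinarith
  have hind : ∀ k : ℕ, k ≤ n + 1 → Wind (Φ (ρ k)) = 0 := by
    intro k
    induction k with
    | zero =>
      intro _
      have : ρ 0 = 0 := by simp [hρ]
      rw [this]
      exact hW0
    | succ k ih =>
      intro hk
      have h1 := hstep (ρ k) (ρ (k+1)) (hρmem k (by omega)) (hρmem (k+1) hk)
        (by rw [abs_sub_comm]; exact hρstep k)
      rw [h1, ih (by omega)]
  have hfin : Wind (Φ R) = 0 := by
    have hρlast : ρ (n+1) = R := by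
      simp only [hρ]
      push_cast
      field_simp
    rw [← hρlast]
    exact hind (n+1) le_rfl
  rw [hWR] at hfin
  have : (Real.pi : ℂ) ≠ 0 := Complex.ofReal_ne_zero.mpr Real.pi_ne_zero
  exact (mul_ne_zero (mul_ne_zero two_ne_zero this) Complex.I_ne_zero) hfin

/-- every point of the unit circle is `e^{iθ}` for some `θ ∈ [0, 2π]`. -/
lemma exists_angle {x : ℂ} (hx : ‖x‖ = 1) :
    ∃ θ ∈ Icc (0:ℝ) (2*Real.pi), Complex.exp (θ * Complex.I) = x := by
  have harg := Complex.norm_mul_exp_arg_mul_I x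
  rw [hx, Complex.ofReal_one, one_mul] at harg
  by_cases h : 0 ≤ Complex.arg x
  · exact ⟨Complex.arg x, ⟨h, le_trans (Complex.arg_le_pi x) (by linarith [Real.pi_pos])⟩, harg⟩
  · refine ⟨Complex.arg x + 2*Real.pi, ⟨?_, ?_⟩, ?_⟩
    · linarith [Complex.neg_pi_lt_arg x, Real.pi_pos]
    · linarith [Complex.arg_le_pi x, not_le.mp h, Real.pi_pos]
    · have h1 : ((Complex.arg x + 2*Real.pi : ℝ) : ℂ) * Complex.I
          = (Complex.arg x : ℂ) * Complex.I + 2 * (Real.pi:ℂ) * Complex.I := by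
        push_cast; ring
      rw [h1, Complex.exp_add, Complex.exp_two_pi_mul_I, mul_one, harg]

/-- continuous logarithm of `z - w` on a compact subset of a Jordan curve avoiding `w`. -/
lemma jordan_log {f : ℂ → ℂ} (hf1 : ContinuousOn f (sphere 0 1)) (hf2 : InjOn f (sphere 0 1))
    {K : Set ℂ} (hKclosed : IsClosed K) (hKsub : K ⊆ f '' (sphere 0 1))
    {w : ℂ} (hwJ : w ∈ f '' (sphere 0 1)) (hwK : w ∉ K) :
    ∃ L : ℂ → ℂ, ContinuousOn L K ∧ ∀ z ∈ K, Complex.exp (L z) = z - w := by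
  classical
  rcases K.eq_empty_or_nonempty with hKe | hKne
  · subst hKe
    exact ⟨fun _ => 0, continuousOn_empty _, fun z hz => absurd hz (notMem_empty z)⟩
  obtain ⟨xw, hxwS, hxw⟩ := hwJ
  have hxwabs : ‖xw‖ = 1 := by
    rwa [mem_sphere_zero_iff_norm] at hxwS
  have hxw0 : xw ≠ 0 := by
    intro h
    rw [h] at hxwabs
    simp at hxwabs
  set ang : ℝ → ℂ := fun θ => Complex.exp (θ * Complex.I) * xw with hang
  have hangcont : Continuous ang :=
    (Complex.continuous_exp.comp (Complex.continuous_ofReal.mul continuous_const)).mul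
      continuous_const
  have hangS : ∀ θ : ℝ, ang θ ∈ sphere 0 1 := by
    intro θ
    rw [mem_sphere_zero_iff_norm]
    show ‖_‖ = 1
    rw [hang]
    simp only
    rw [norm_mul, Complex.norm_exp_ofReal_mul_I, hxwabs, mul_one]
  have hang0 : ang 0 = xw := by
    simp [hang]
  have hang2pi : ang (2*Real.pi) = xw := by
    simp only [hang]
    have h1 : ((2*Real.pi : ℝ) : ℂ) * Complex.I = 2 * (Real.pi:ℂ) * Complex.I := by
      push_cast; ring
    rw [h1, Complex.exp_two_pi_mul_I, one_mul]
  set X : Set ℂ := sphere 0 1 ∩ f ⁻¹' K with hX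
  have hXclosed : IsClosed X := hf1.preimage_isClosed_of_isClosed isClosed_sphere hKclosed
  have hxwX : xw ∉ X := by
    intro h
    rw [hX] at h
    apply hwK
    rw [← hxw]
    exact h.2
  set P : Set ℝ := Icc 0 (2*Real.pi) ∩ ang ⁻¹' X with hP
  have hPclosed : IsClosed P := isClosed_Icc.inter (hXclosed.preimage hangcont)
  have hPcompact : IsCompact P := isCompact_Icc.of_isClosed_subset hPclosed inter_subset_left
  have hPne : P.Nonempty := by
    obtain ⟨k₀, hk₀⟩ := hKne
    obtain ⟨x₀, hx₀S, hx₀⟩ := hKsub hk₀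
    have hx₀abs : ‖x₀‖ = 1 := by rwa [mem_sphere_zero_iff_norm] at hx₀S
    obtain ⟨θ, hθI, hθ⟩ := exists_angle (x := x₀ * xw⁻¹)
      (by rw [norm_mul, hx₀abs, norm_inv, hxwabs]; norm_num)
    refine ⟨θ, hθI, ?_⟩
    rw [mem_preimage]
    have hangθ : ang θ = x₀ := by
      rw [hang]
      simp only
      rw [hθ]
      field_simp
    rw [hangθ]
    exact ⟨hx₀S, by rw [mem_preimage, hx₀]; exact hk₀⟩
  set δ₁ : ℝ := sInf P with hδ₁
  set δ₂ : ℝ := sSup P with hδ₂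
  have hδ₁P : δ₁ ∈ P := hPcompact.sInf_mem hPne
  have hδ₂P : δ₂ ∈ P := hPcompact.sSup_mem hPne
  have hδ₁0 : 0 < δ₁ := by
    rcases lt_or_eq_of_le hδ₁P.1.1 with h | h
    · exact h
    · exfalso
      apply hxwX
      have : ang 0 ∈ X := by
        have := hδ₁P.2
        rw [← h] at this
        exact this
      rwa [hang0] at this
  have hδ₂2π : δ₂ < 2*Real.pi := by
    rcases lt_or_eq_of_le hδ₂P.1.2 with h | h
    · exact h
    · exfalso
      apply hxwX
      have : ang (2*Real.pi) ∈ X := by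
        have := hδ₂P.2
        rw [h] at this
        exact this
      rwa [hang2pi] at this
  have hδ₁₂ : δ₁ ≤ δ₂ := csInf_le_csSup hPne hPcompact.bddBelow hPcompact.bddAbove
  set I' : Set ℝ := Icc δ₁ δ₂ with hI'
  have hXsub : X ⊆ ang '' I' := by
    intro x hx
    have hxS : x ∈ sphere 0 1 := hx.1
    have hxabs : ‖x‖ = 1 := by rwa [mem_sphere_zero_iff_norm] at hxS
    obtain ⟨θ, hθI, hθ⟩ := exists_angle (x := x * xw⁻¹)
      (by rw [norm_mul, hxabs, norm_inv, hxwabs]; norm_num)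
    have hangθ : ang θ = x := by
      rw [hang]
      simp only
      rw [hθ]
      field_simp
    have hθP : θ ∈ P := ⟨hθI, by rw [mem_preimage, hangθ]; exact hx⟩
    refine ⟨θ, ⟨?_, ?_⟩, hangθ⟩
    · exact csInf_le hPcompact.bddBelow hθP
    · exact le_csSup hPcompact.bddAbove hθP
  set γ : ℝ → ℂ := fun θ => f (ang θ) with hγ
  have hγcont : ContinuousOn γ I' := hf1.comp hangcont.continuousOn (fun θ _ => hangS θ)
  -- injectivity of γ on I'
  have hanginj : ∀ θ ∈ I', ∀ θ' ∈ I', ang θ = ang θ' → θ = θ' := by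
    intro θ hθ θ' hθ' heq
    have h1 : Complex.exp ((θ:ℂ) * Complex.I) = Complex.exp ((θ':ℂ) * Complex.I) := by
      have := heq
      rw [hang] at this
      simp only at this
      exact mul_right_cancel₀ hxw0 this
    obtain ⟨n, hn⟩ := Complex.exp_eq_exp_iff_exists_int.mp h1
    have him : θ = θ' + 2*Real.pi*n := by
      have := congrArg Complex.im hn
      simp at this
      rw [this]; ring
    have hbound : |θ - θ'| < 2*Real.pi := by
      rw [abs_sub_lt_iff]
      constructor
      · have := hθ.2; have := hθ'.1; linarith [hδ₁0, hδ₂2π]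
      · have := hθ'.2; have := hθ.1; linarith [hδ₁0, hδ₂2π]
    have hn0 : n = 0 := by
      by_contra hn0
      have h2 : (1:ℝ) ≤ |(n:ℝ)| := by
        have : (1:ℤ) ≤ |n| := Int.one_le_abs (by omega)
        calc (1:ℝ) ≤ (|n| : ℤ) := by exact_mod_cast this
        _ = |(n:ℝ)| := by push_cast; rfl
      have h3 : |θ - θ'| = 2*Real.pi*|(n:ℝ)| := by
        rw [him]
        rw [show θ' + 2*Real.pi*n - θ' = 2*Real.pi*(n:ℝ) by ring]
        rw [abs_mul, _root_.abs_of_nonneg (by positivity : (0:ℝ) ≤ 2*Real.pi)]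
      rw [h3] at hbound
      nlinarith [Real.pi_pos]
    rw [hn0] at him
    simpa using him
  have hγinj : InjOn γ I' := by
    intro θ hθ θ' hθ' heq
    exact hanginj θ hθ θ' hθ' (hf2 (hangS θ) (hangS θ') heq)
  have hγw : ∀ θ ∈ I', γ θ ≠ w := by
    intro θ hθ heq
    have h1 : ang θ = xw := hf2 (hangS θ) hxwS (by rw [← hxw] at heq; exact heq)
    have h2 : Complex.exp ((θ:ℂ) * Complex.I) = 1 := by
      rw [hang] at h1
      simp only at h1
      have := mul_right_cancel₀ hxw0 (by rw [h1, one_mul] : Complex.exp ((θ:ℂ)*Complex.I) * xw = 1 * xw)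
      exact this
    obtain ⟨n, hn⟩ := Complex.exp_eq_one_iff.mp h2
    have him : θ = 2*Real.pi*n := by
      have := congrArg Complex.im hn
      simp at this
      rw [this]; ring
    have hθ1 : 0 < θ := lt_of_lt_of_le hδ₁0 hθ.1
    have hθ2 : θ < 2*Real.pi := lt_of_le_of_lt hθ.2 hδ₂2π
    have hn1 : (0:ℝ) < n := by nlinarith [Real.pi_pos]
    have hn2 : (n:ℝ) < 1 := by nlinarith [Real.pi_pos]
    have : (0:ℤ) < n := by exact_mod_cast hn1
    have : (n:ℤ) < 1 := by exact_mod_cast hn2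
    omega
  have hKγ : K ⊆ γ '' I' := by
    intro k hk
    obtain ⟨x, hxS, hxk⟩ := hKsub hk
    have hxX : x ∈ X := ⟨hxS, by rw [mem_preimage, hxk]; exact hk⟩
    obtain ⟨θ, hθI, hθ⟩ := hXsub hxX
    exact ⟨θ, hθI, by rw [hγ]; simp only; rw [hθ, hxk]⟩
  -- the lift on the interval
  obtain ⟨LI, hLIcont, hLIexp⟩ := exists_lift hδ₁₂
    (ContinuousOn.sub hγcont continuousOn_const)
    (fun θ hθ => sub_ne_zero.mpr (hγw θ hθ))
  -- the compact homeomorphism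
  haveI hcs : CompactSpace ↥I' := isCompact_iff_compactSpace.mp isCompact_Icc
  set JS : Set ℂ := γ '' I' with hJS
  have hbij : Function.Bijective (fun θ : ↥I' => (⟨γ θ, mem_image_of_mem γ θ.2⟩ : ↥JS)) := by
    constructor
    · intro θ θ' h
      have := congrArg Subtype.val h
      simp only at this
      exact Subtype.ext (hγinj θ.2 θ'.2 this)
    · rintro ⟨z, hz⟩
      obtain ⟨θ, hθ, hθz⟩ := hz
      exact ⟨⟨θ, hθ⟩, Subtype.ext hθz⟩
  set e : ↥I' ≃ ↥JS := Equiv.ofBijective _ hbij with he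
  have hecont : Continuous e :=
    (continuousOn_iff_continuous_restrict.mp hγcont).subtype_mk _
  set homeo : ↥I' ≃ₜ ↥JS := hecont.homeoOfEquivCompactToT2 with hhomeo
  set σ : ↥JS → ↥I' := ⇑homeo.symm with hσ
  set L : ℂ → ℂ := fun z => if hz : z ∈ JS then LI ((σ ⟨z, hz⟩ : ↥I') : ℝ) else 0 with hLdef
  have hγσ : ∀ j : ↥JS, γ ((σ j : ↥I') : ℝ) = (j : ℂ) := by
    intro j
    have h1 : homeo (σ j) = j := homeo.apply_symm_apply j
    have h2 : ((homeo (σ j) : ↥JS) : ℂ) = (j : ℂ) := congrArg Subtype.val h1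
    exact h2
  have hLJS : ContinuousOn L JS := by
    rw [continuousOn_iff_continuous_restrict]
    have hres : JS.restrict L = fun j : ↥JS => LI ((σ j : ↥I') : ℝ) := by
      funext j
      show L (j : ℂ) = _
      rw [hLdef]
      simp only
      rw [dif_pos j.2]
    change Continuous (JS.restrict L)
    rw [hres]
    exact (continuousOn_iff_continuous_restrict.mp hLIcont).comp homeo.symm.continuous
  refine ⟨L, hLJS.mono hKγ, ?_⟩
  intro z hz
  have hzJS : z ∈ JS := hKγ hz
  have hLz : L z = LI ((σ ⟨z, hzJS⟩ : ↥I') : ℝ) := by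
    rw [hLdef]
    simp only
    rw [dif_pos hzJS]
  rw [hLz, hLIexp _ (σ ⟨z, hzJS⟩).2]
  rw [Pi.sub_apply, hγσ ⟨z, hzJS⟩]

end

end Stmt14Aux

/-- if `F` is inner, `V` a Jordan domain compactly contained in `𝔻`, and
`U` a connected component of `F⁻¹(V) ⊆ 𝔻`, then `∂U = ∂(ℂ ∖ closure U)`. -/
theorem stmt14 (F : ℂ → ℂ) (hF : IsInner F)
    (V : Set ℂ) (hV : IsJordanDomain V) (hVsub : closure V ⊆ unitDisk)
    (U : Set ℂ) (z₀ : ℂ) (hz₀ : z₀ ∈ unitDisk ∩ F ⁻¹' V)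
    (hU : U = connectedComponentIn (unitDisk ∩ F ⁻¹' V) z₀) :
    frontier U = frontier (closure U)ᶜ := by
  classical
  obtain ⟨hFdiff, -, -⟩ := hF
  have hVopen : IsOpen V := hV.1
  have hDopen : IsOpen unitDisk := Metric.isOpen_ball
  set S : Set ℂ := unitDisk ∩ F ⁻¹' V with hS
  have hSopen : IsOpen S := hFdiff.continuousOn.isOpen_inter_preimage hDopen hVopen
  have hUopen : IsOpen U := by rw [hU]; exact hSopen.connectedComponentIn
  have hUsub : U ⊆ S := by rw [hU]; exact connectedComponentIn_subset _ _
  have hUD : U ⊆ unitDisk := hUsub.trans inter_subset_left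
  -- the key inclusion: `U` is regular open
  have key : interior (closure U) ⊆ U := by
    intro z hz
    have hzcl : z ∈ closure U := interior_subset hz
    have hzD : z ∈ unitDisk := by
      have h1 : closure U ⊆ closure unitDisk := closure_mono hUD
      have h2 : interior (closure U) ⊆ interior (closure unitDisk) := interior_mono h1
      have h3 : interior (closure unitDisk) = unitDisk := by
        show interior (closure (ball (0:ℂ) 1)) = ball 0 1
        rw [closure_ball (0:ℂ) one_ne_zero, interior_closedBall (0:ℂ) one_ne_zero]
      rw [← h3]; exact h2 hz
    have hclV : ∀ x, x ∈ closure U → x ∈ unitDisk → F x ∈ closure V := by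
      intro x hx hxD
      have hcx : ContinuousAt F x := hFdiff.continuousOn.continuousAt (hDopen.mem_nhds hxD)
      have h1 : F x ∈ closure (F '' U) := hcx.continuousWithinAt.mem_closure_image hx
      refine closure_mono ?_ h1
      rintro - ⟨u, hu, rfl⟩
      exact (hUsub hu).2
    by_cases hFzV : F z ∈ V
    · -- `z` lies in the ambient open set: it must belong to `U`
      have hzS : z ∈ S := ⟨hzD, hFzV⟩
      have hopencc : IsOpen (connectedComponentIn S z) := hSopen.connectedComponentIn
      obtain ⟨u, hu1, hu2⟩ := mem_closure_iff_nhds.mp hzcl _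
        (hopencc.mem_nhds (mem_connectedComponentIn hzS))
      have e1 : connectedComponentIn S z = connectedComponentIn S u := connectedComponentIn_eq hu1
      have e2 : connectedComponentIn S z₀ = connectedComponentIn S u := by
        apply connectedComponentIn_eq
        rw [← hU]; exact hu2
      rw [hU, e2, ← e1]
      exact mem_connectedComponentIn hzS
    · exfalso
      have hFzcl : F z ∈ closure V := hclV z hzcl hzD
      have hFzJ : F z ∈ frontier V := by
        rw [hVopen.frontier_eq]
        exact ⟨hFzcl, hFzV⟩
      have hio : IsOpen (interior (closure U) ∩ unitDisk) := isOpen_interior.inter hDopen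
      obtain ⟨ρ, hρ0, hρ⟩ := Metric.isOpen_iff.mp hio z ⟨hz, hzD⟩
      have hA : AnalyticOnNhd ℂ F unitDisk := hFdiff.analyticOnNhd hDopen
      have hpc : IsPreconnected unitDisk := (convex_ball (0:ℂ) 1).isPreconnected
      rcases hA.is_constant_or_isOpen hpc with ⟨v, hv⟩ | hopenmap
      · -- constant case is impossible
        have h1 : F z₀ = v := hv z₀ hz₀.1
        have h2 : F z = v := hv z hzD
        apply hFzV
        rw [h2, ← h1]
        exact hz₀.2
      · -- open mapping: `F z` is interior to `closure V`
        have hballD : ball z ρ ⊆ unitDisk := fun x hx => (hρ hx).2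
        have himg : IsOpen (F '' ball z ρ) := hopenmap _ hballD isOpen_ball
        have himgsub : F '' ball z ρ ⊆ closure V := by
          rintro - ⟨x, hx, rfl⟩
          exact hclV x (interior_subset (hρ hx).1) (hρ hx).2
        have hFzint : F z ∈ interior (closure V) :=
          interior_maximal himgsub himg (mem_image_of_mem F (mem_ball_self hρ0))
        -- now contradict the Jordan curve structure of `frontier V`
        set w : ℂ := F z with hwdef
        set K : Set ℂ := frontier (closure V) with hK
        have hKclosed : IsClosed K := isClosed_frontier
        have hKsubcl : K ⊆ closure V := by
          rw [hK]
          intro y hy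
          have := frontier_subset_closure hy
          rwa [closure_closure] at this
        have hKJ : K ⊆ frontier V := frontier_closure_subset
        have hwK : w ∉ K := by
          intro h
          rw [hK, ← closure_diff_interior, closure_closure] at h
          exact h.2 hFzint
        have hcompl : Kᶜ ⊆ interior (closure V) ∪ (closure V)ᶜ := by
          intro y hy
          by_cases hyV : y ∈ closure V
          · left
            by_contra hint
            apply hy
            rw [hK, ← closure_diff_interior, closure_closure]
            exact ⟨hyV, hint⟩
          · right; exact hyV
        set C : Set ℂ := connectedComponentIn Kᶜ w with hC
        have hwKc : w ∈ Kᶜ := hwK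
        have hCV : C ⊆ interior (closure V) := by
          apply IsPreconnected.subset_left_of_subset_union isOpen_interior
            isClosed_closure.isOpen_compl
            (disjoint_left.mpr fun a ha hc => hc (interior_subset ha))
            ((connectedComponentIn_subset _ _).trans hcompl)
            ⟨w, mem_connectedComponentIn hwKc, hFzint⟩
            isPreconnected_connectedComponentIn
        have hVd : closure V ⊆ ball (0:ℂ) 1 := hVsub
        have hw1 : ‖w‖ < 1 := mem_ball_zero_iff.mp (hVd hFzcl)
        have hsub3 : C ∪ K ⊆ ball w 3 := by
          intro y hy
          have hyV : y ∈ closure V := by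
            rcases hy with hy | hy
            · exact interior_subset (hCV hy)
            · exact hKsubcl hy
          have hy1 : ‖y‖ < 1 := mem_ball_zero_iff.mp (hVd hyV)
          rw [mem_ball, dist_eq_norm]
          calc ‖y - w‖ ≤ ‖y‖ + ‖w‖ := norm_sub_le _ _
          _ < 3 := by linarith
        have hKcompact : IsCompact K :=
          (isCompact_closedBall (0:ℂ) 1).of_isClosed_subset hKclosed
            (hKsubcl.trans (hVd.trans ball_subset_closedBall))
        obtain ⟨f, hf1, hf2, hf3⟩ := hV.2.2.2.2
        have hJset : f '' (sphere 0 1) = frontier V := hf3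
        have hKsubJ : K ⊆ f '' (sphere 0 1) := by rw [hJset]; exact hKJ
        have hwJ : w ∈ f '' (sphere 0 1) := by rw [hJset]; exact hFzJ
        obtain ⟨L, hLcont, hLexp⟩ := Stmt14Aux.jordan_log hf1 hf2 hKclosed hKsubJ hwJ hwK
        exact Stmt14Aux.no_bounded_comp hKcompact hwK hLcont hLexp
          (by norm_num : (0:ℝ) < 3) hsub3
  -- conclude from regularity
  rw [frontier_compl]
  have h1 : frontier U = closure U \ U := hUopen.frontier_eq
  have h2 : frontier (closure U) = closure U \ interior (closure U) := by
    rw [← closure_diff_interior, closure_closure]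
  rw [h1, h2]
  apply Set.ext
  intro x
  constructor
  · rintro ⟨hx1, hx2⟩
    exact ⟨hx1, fun hint => hx2 (key hint)⟩
  · rintro ⟨hx1, hx2⟩
    exact ⟨hx1, fun hxU => hx2 (interior_maximal subset_closure hUopen hxU)⟩
end
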